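/- The subgroup of GL₇(R) generated by the permutation matrices M₇⁺(2,3), M₇⁺(3,4), M₇⁺(4,5), M₇⁺(5,6), M₇⁺(6,7) together with the matrix A₁ = diag([[1,1,1],[0,0,−1],[0,−1,0]], I₄) is isomorphic to the Coxeter group W(D₆) of order 23040, with the listed generators corresponding to the Coxeter generators s₁, s₂, s₃, s₄, s₅, s₁′ of W(D₆). -/

import Mathlib

/-- The 7×7 permutation matrix of the transposition `(i,j)`. -/
def P7 (i j : Fin 7) : Matrix (Fin 7) (Fin 7) ℝ :=
  fun k l => if Equiv.swap i j k = l then 1 else 0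

/-- The matrix `A₁ = diag([[1,1,1],[0,0,−1],[0,−1,0]], I₄)`. -/
def A₁ : Matrix (Fin 7) (Fin 7) ℝ :=
  !![1, 1, 1, 0, 0, 0, 0;
     0, 0, -1, 0, 0, 0, 0;
     0, -1, 0, 0, 0, 0, 0;
     0, 0, 0, 1, 0, 0, 0;
     0, 0, 0, 0, 1, 0, 0;
     0, 0, 0, 0, 0, 1, 0;
     0, 0, 0, 0, 0, 0, 1]

/-- The Coxeter matrix of type `D₆`, with index `0` corresponding to the vertex `1′`
(adjacent only to `2`) and indices `1, …, 5` corresponding to the vertices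
`1, …, 5` of the path (with `i` adjacent to `j` iff `|i − j| = 1`). -/
def CoxD6 : CoxeterMatrix (Fin 6) where
  M := Matrix.of fun i j : Fin 6 =>
    if i = j then 1
    else if (i.val = 0 ∧ j.val = 2) ∨ (j.val = 0 ∧ i.val = 2) ∨
        (1 ≤ i.val ∧ 1 ≤ j.val ∧ (i.val + 1 = j.val ∨ j.val + 1 = i.val)) then 3
    else 2
  off_diagonal i i' h := by
    simp only [Matrix.of_apply, if_neg h]
    split_ifs <;> decide


section Aux

abbrev W := CoxD6.Group
def cs : CoxeterSystem CoxD6 W := CoxD6.toCoxeterSystem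
abbrev sg (i : Fin 6) : W := cs.simple i
def wp (l : List (Fin 6)) : W := cs.wordProd l

lemma wp_nil : wp [] = 1 := cs.wordProd_nil
lemma wp_cons (i : Fin 6) (l : List (Fin 6)) : wp (i :: l) = sg i * wp l := cs.wordProd_cons i l
lemma wp_append (l l' : List (Fin 6)) : wp (l ++ l') = wp l * wp l' := cs.wordProd_append l l'
lemma wp_singleton (i : Fin 6) : wp [i] = sg i := cs.wordProd_singleton i

example : CoxD6.M 0 2 = 3 := by decide
example : CoxD6.M 0 1 = 2 := by decide

lemma ss_comm {i j : Fin 6} (h : CoxD6.M i j = 2) : sg i * sg j = sg j * sg i := by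
  have hp := cs.simple_mul_simple_pow i j
  rw [h] at hp
  have h2 : (sg i * sg j) * (sg i * sg j) = 1 := by rw [← sq]; exact hp
  have := eq_inv_of_mul_eq_one_left h2
  rw [this, mul_inv_rev, cs.inv_simple, cs.inv_simple]

lemma ss_braid {i j : Fin 6} (h : CoxD6.M i j = 3) : sg i * sg j * sg i = sg j * sg i * sg j := by
  have hp := cs.simple_mul_simple_pow i j
  rw [h] at hp
  have h2 : (sg i * sg j * sg i) * (sg j * sg i * sg j) = 1 := by
    have : (sg i * sg j) ^ 3 = (sg i * sg j) * (sg i * sg j) * (sg i * sg j) := by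
      rw [pow_succ, pow_succ, pow_one]
    rw [this] at hp
    calc (sg i * sg j * sg i) * (sg j * sg i * sg j)
        = (sg i * sg j) * (sg i * sg j) * (sg i * sg j) := by group
      _ = 1 := hp
  have := eq_inv_of_mul_eq_one_left h2
  rw [this, mul_inv_rev, mul_inv_rev, cs.inv_simple, cs.inv_simple]
  exact (mul_assoc _ _ _).symm

lemma mul3_braid {i j : Fin 6} (h : CoxD6.M i j = 3) (w : W) :
    sg i * (sg j * (sg i * w)) = sg j * (sg i * (sg j * w)) := by
  rw [← mul_assoc, ← mul_assoc, ← mul_assoc, ← mul_assoc, ss_braid h]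

lemma mul2_comm {i j : Fin 6} (h : CoxD6.M i j = 2) (w : W) :
    sg i * (sg j * w) = sg j * (sg i * w) := by
  rw [← mul_assoc, ← mul_assoc, ss_comm h]

lemma move_cancel (xs ys : List (Fin 6)) (i : Fin 6) :
    wp (xs ++ i :: i :: ys) = wp (xs ++ ys) := by
  simp only [wp_append, wp_cons, cs.simple_mul_simple_cancel_left]

lemma move_swap (xs ys : List (Fin 6)) (i j : Fin 6) (h : CoxD6.M i j = 2) :
    wp (xs ++ i :: j :: ys) = wp (xs ++ j :: i :: ys) := by
  simp only [wp_append, wp_cons]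
  rw [mul2_comm h]

lemma move_braid (xs ys : List (Fin 6)) (i j : Fin 6) (h : CoxD6.M i j = 3) :
    wp (xs ++ i :: j :: i :: ys) = wp (xs ++ j :: i :: j :: ys) := by
  simp only [wp_append, wp_cons]
  rw [mul3_braid h]

-- test a generated-style calc
example : wp [0, 1] = wp ([1, 0] ++ []) :=
  calc wp [0, 1] = wp [1, 0] := move_swap [] [] 0 1 (by decide)
    _ = wp ([1,0] ++ []) := by rw [List.append_nil]

def lw2 : Fin 4 → List (Fin 6)
  | 0 => [1]
  | 1 => []
  | 2 => [0]
  | 3 => [1, 0]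

def lw3 : Fin 6 → List (Fin 6)
  | 0 => [1, 2]
  | 1 => [2]
  | 2 => []
  | 3 => [0, 2]
  | 4 => [1, 0, 2]
  | 5 => [2, 1, 0, 2]

def lw4 : Fin 8 → List (Fin 6)
  | 0 => [1, 2, 3]
  | 1 => [2, 3]
  | 2 => [3]
  | 3 => []
  | 4 => [0, 2, 3]
  | 5 => [1, 0, 2, 3]
  | 6 => [2, 1, 0, 2, 3]
  | 7 => [3, 2, 1, 0, 2, 3]

def lw5 : Fin 10 → List (Fin 6)
  | 0 => [1, 2, 3, 4]
  | 1 => [2, 3, 4]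
  | 2 => [3, 4]
  | 3 => [4]
  | 4 => []
  | 5 => [0, 2, 3, 4]
  | 6 => [1, 0, 2, 3, 4]
  | 7 => [2, 1, 0, 2, 3, 4]
  | 8 => [3, 2, 1, 0, 2, 3, 4]
  | 9 => [4, 3, 2, 1, 0, 2, 3, 4]

def lw6 : Fin 12 → List (Fin 6)
  | 0 => [1, 2, 3, 4, 5]
  | 1 => [2, 3, 4, 5]
  | 2 => [3, 4, 5]
  | 3 => [4, 5]
  | 4 => [5]
  | 5 => []
  | 6 => [0, 2, 3, 4, 5]
  | 7 => [1, 0, 2, 3, 4, 5]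
  | 8 => [2, 1, 0, 2, 3, 4, 5]
  | 9 => [3, 2, 1, 0, 2, 3, 4, 5]
  | 10 => [4, 3, 2, 1, 0, 2, 3, 4, 5]
  | 11 => [5, 4, 3, 2, 1, 0, 2, 3, 4, 5]

lemma key2 : ∀ (i : Fin 6) (r : Fin 4), i.val ≤ 1 →
    ∃ (r' : Fin 4), wp (i :: lw2 r) = wp (lw2 r')
  | 0, 0, _ => ⟨3, by
      calc wp [0, 1] = wp [1, 0] := move_swap [] [] 0 1 (by decide)⟩
  | 0, 1, _ => ⟨2, rfl⟩
  | 0, 2, _ => ⟨1, by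
      calc wp [0, 0] = wp [] := move_cancel [] [] 0⟩
  | 0, 3, _ => ⟨0, by
      calc wp [0, 1, 0] = wp [1, 0, 0] := move_swap [] [0] 0 1 (by decide)
        _ = wp [1] := move_cancel [1] [] 0⟩
  | 1, 0, _ => ⟨1, by
      calc wp [1, 1] = wp [] := move_cancel [] [] 1⟩
  | 1, 1, _ => ⟨0, rfl⟩
  | 1, 2, _ => ⟨3, rfl⟩
  | 1, 3, _ => ⟨2, by
      calc wp [1, 1, 0] = wp [0] := move_cancel [] [0] 1⟩
  | 2, _, hi => absurd hi (by decide)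
  | 3, _, hi => absurd hi (by decide)
  | 4, _, hi => absurd hi (by decide)
  | 5, _, hi => absurd hi (by decide)

lemma key3 : ∀ (i : Fin 6) (r : Fin 6), i.val ≤ 2 →
    ∃ (r' : Fin 6) (t : List (Fin 6)),
      (t = [] ∨ ∃ k : Fin 6, t = [k] ∧ k.val ≤ 1) ∧
      wp (i :: lw3 r) = wp (lw3 r' ++ t)
  | 0, 0, _ => ⟨4, [], Or.inl rfl, by
      calc wp [0, 1, 2] = wp [1, 0, 2] := move_swap [] [2] 0 1 (by decide)⟩
  | 0, 1, _ => ⟨3, [], Or.inl rfl, rfl⟩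
  | 0, 2, _ => ⟨2, [0], Or.inr ⟨0, rfl, by decide⟩, rfl⟩
  | 0, 3, _ => ⟨1, [], Or.inl rfl, by
      calc wp [0, 0, 2] = wp [2] := move_cancel [] [2] 0⟩
  | 0, 4, _ => ⟨0, [], Or.inl rfl, by
      calc wp [0, 1, 0, 2] = wp [1, 0, 0, 2] := move_swap [] [0, 2] 0 1 (by decide)
        _ = wp [1, 2] := move_cancel [1] [2] 0⟩
  | 0, 5, _ => ⟨5, [1], Or.inr ⟨1, rfl, by decide⟩, by
      calc wp [0, 2, 1, 0, 2] = wp [0, 2, 0, 1, 2] := move_swap [0, 2] [2] 1 0 (by decide)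
        _ = wp [2, 0, 2, 1, 2] := move_braid [] [1, 2] 0 2 (by decide)
        _ = wp [2, 0, 1, 2, 1] := move_braid [2, 0] [] 2 1 (by decide)
        _ = wp [2, 1, 0, 2, 1] := move_swap [2] [2, 1] 0 1 (by decide)⟩
  | 1, 0, _ => ⟨1, [], Or.inl rfl, by
      calc wp [1, 1, 2] = wp [2] := move_cancel [] [2] 1⟩
  | 1, 1, _ => ⟨0, [], Or.inl rfl, rfl⟩
  | 1, 2, _ => ⟨2, [1], Or.inr ⟨1, rfl, by decide⟩, rfl⟩
  | 1, 3, _ => ⟨4, [], Or.inl rfl, rfl⟩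
  | 1, 4, _ => ⟨3, [], Or.inl rfl, by
      calc wp [1, 1, 0, 2] = wp [0, 2] := move_cancel [] [0, 2] 1⟩
  | 1, 5, _ => ⟨5, [0], Or.inr ⟨0, rfl, by decide⟩, by
      calc wp [1, 2, 1, 0, 2] = wp [2, 1, 2, 0, 2] := move_braid [] [0, 2] 1 2 (by decide)
        _ = wp [2, 1, 0, 2, 0] := move_braid [2, 1] [] 2 0 (by decide)⟩
  | 2, 0, _ => ⟨0, [1], Or.inr ⟨1, rfl, by decide⟩, by
      calc wp [2, 1, 2] = wp [1, 2, 1] := move_braid [] [] 2 1 (by decide)⟩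
  | 2, 1, _ => ⟨2, [], Or.inl rfl, by
      calc wp [2, 2] = wp [] := move_cancel [] [] 2⟩
  | 2, 2, _ => ⟨1, [], Or.inl rfl, rfl⟩
  | 2, 3, _ => ⟨3, [0], Or.inr ⟨0, rfl, by decide⟩, by
      calc wp [2, 0, 2] = wp [0, 2, 0] := move_braid [] [] 2 0 (by decide)⟩
  | 2, 4, _ => ⟨5, [], Or.inl rfl, rfl⟩
  | 2, 5, _ => ⟨4, [], Or.inl rfl, by
      calc wp [2, 2, 1, 0, 2] = wp [1, 0, 2] := move_cancel [] [1, 0, 2] 2⟩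
  | 3, _, hi => absurd hi (by decide)
  | 4, _, hi => absurd hi (by decide)
  | 5, _, hi => absurd hi (by decide)

lemma key4 : ∀ (i : Fin 6) (r : Fin 8), i.val ≤ 3 →
    ∃ (r' : Fin 8) (t : List (Fin 6)),
      (t = [] ∨ ∃ k : Fin 6, t = [k] ∧ k.val ≤ 2) ∧
      wp (i :: lw4 r) = wp (lw4 r' ++ t)
  | 0, 0, _ => ⟨5, [], Or.inl rfl, by
      calc wp [0, 1, 2, 3] = wp [1, 0, 2, 3] := move_swap [] [2, 3] 0 1 (by decide)⟩
  | 0, 1, _ => ⟨4, [], Or.inl rfl, rfl⟩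
  | 0, 2, _ => ⟨2, [0], Or.inr ⟨0, rfl, by decide⟩, by
      calc wp [0, 3] = wp [3, 0] := move_swap [] [] 0 3 (by decide)⟩
  | 0, 3, _ => ⟨3, [0], Or.inr ⟨0, rfl, by decide⟩, rfl⟩
  | 0, 4, _ => ⟨1, [], Or.inl rfl, by
      calc wp [0, 0, 2, 3] = wp [2, 3] := move_cancel [] [2, 3] 0⟩
  | 0, 5, _ => ⟨0, [], Or.inl rfl, by
      calc wp [0, 1, 0, 2, 3] = wp [1, 0, 0, 2, 3] := move_swap [] [0, 2, 3] 0 1 (by decide)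
        _ = wp [1, 2, 3] := move_cancel [1] [2, 3] 0⟩
  | 0, 6, _ => ⟨6, [1], Or.inr ⟨1, rfl, by decide⟩, by
      calc wp [0, 2, 1, 0, 2, 3] = wp [0, 2, 0, 1, 2, 3] := move_swap [0, 2] [2, 3] 1 0 (by decide)
        _ = wp [2, 0, 2, 1, 2, 3] := move_braid [] [1, 2, 3] 0 2 (by decide)
        _ = wp [2, 0, 1, 2, 1, 3] := move_braid [2, 0] [3] 2 1 (by decide)
        _ = wp [2, 1, 0, 2, 1, 3] := move_swap [2] [2, 1, 3] 0 1 (by decide)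
        _ = wp [2, 1, 0, 2, 3, 1] := move_swap [2, 1, 0, 2] [] 1 3 (by decide)⟩
  | 0, 7, _ => ⟨7, [1], Or.inr ⟨1, rfl, by decide⟩, by
      calc wp [0, 3, 2, 1, 0, 2, 3] = wp [3, 0, 2, 1, 0, 2, 3] := move_swap [] [2, 1, 0, 2, 3] 0 3 (by decide)
        _ = wp [3, 0, 2, 0, 1, 2, 3] := move_swap [3, 0, 2] [2, 3] 1 0 (by decide)
        _ = wp [3, 2, 0, 2, 1, 2, 3] := move_braid [3] [1, 2, 3] 0 2 (by decide)
        _ = wp [3, 2, 0, 1, 2, 1, 3] := move_braid [3, 2, 0] [3] 2 1 (by decide)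
        _ = wp [3, 2, 1, 0, 2, 1, 3] := move_swap [3, 2] [2, 1, 3] 0 1 (by decide)
        _ = wp [3, 2, 1, 0, 2, 3, 1] := move_swap [3, 2, 1, 0, 2] [] 1 3 (by decide)⟩
  | 1, 0, _ => ⟨1, [], Or.inl rfl, by
      calc wp [1, 1, 2, 3] = wp [2, 3] := move_cancel [] [2, 3] 1⟩
  | 1, 1, _ => ⟨0, [], Or.inl rfl, rfl⟩
  | 1, 2, _ => ⟨2, [1], Or.inr ⟨1, rfl, by decide⟩, by
      calc wp [1, 3] = wp [3, 1] := move_swap [] [] 1 3 (by decide)⟩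
  | 1, 3, _ => ⟨3, [1], Or.inr ⟨1, rfl, by decide⟩, rfl⟩
  | 1, 4, _ => ⟨5, [], Or.inl rfl, rfl⟩
  | 1, 5, _ => ⟨4, [], Or.inl rfl, by
      calc wp [1, 1, 0, 2, 3] = wp [0, 2, 3] := move_cancel [] [0, 2, 3] 1⟩
  | 1, 6, _ => ⟨6, [0], Or.inr ⟨0, rfl, by decide⟩, by
      calc wp [1, 2, 1, 0, 2, 3] = wp [2, 1, 2, 0, 2, 3] := move_braid [] [0, 2, 3] 1 2 (by decide)
        _ = wp [2, 1, 0, 2, 0, 3] := move_braid [2, 1] [3] 2 0 (by decide)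
        _ = wp [2, 1, 0, 2, 3, 0] := move_swap [2, 1, 0, 2] [] 0 3 (by decide)⟩
  | 1, 7, _ => ⟨7, [0], Or.inr ⟨0, rfl, by decide⟩, by
      calc wp [1, 3, 2, 1, 0, 2, 3] = wp [3, 1, 2, 1, 0, 2, 3] := move_swap [] [2, 1, 0, 2, 3] 1 3 (by decide)
        _ = wp [3, 2, 1, 2, 0, 2, 3] := move_braid [3] [0, 2, 3] 1 2 (by decide)
        _ = wp [3, 2, 1, 0, 2, 0, 3] := move_braid [3, 2, 1] [3] 2 0 (by decide)
        _ = wp [3, 2, 1, 0, 2, 3, 0] := move_swap [3, 2, 1, 0, 2] [] 0 3 (by decide)⟩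
  | 2, 0, _ => ⟨0, [1], Or.inr ⟨1, rfl, by decide⟩, by
      calc wp [2, 1, 2, 3] = wp [1, 2, 1, 3] := move_braid [] [3] 2 1 (by decide)
        _ = wp [1, 2, 3, 1] := move_swap [1, 2] [] 1 3 (by decide)⟩
  | 2, 1, _ => ⟨2, [], Or.inl rfl, by
      calc wp [2, 2, 3] = wp [3] := move_cancel [] [3] 2⟩
  | 2, 2, _ => ⟨1, [], Or.inl rfl, rfl⟩
  | 2, 3, _ => ⟨3, [2], Or.inr ⟨2, rfl, by decide⟩, rfl⟩
  | 2, 4, _ => ⟨4, [0], Or.inr ⟨0, rfl, by decide⟩, by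
      calc wp [2, 0, 2, 3] = wp [0, 2, 0, 3] := move_braid [] [3] 2 0 (by decide)
        _ = wp [0, 2, 3, 0] := move_swap [0, 2] [] 0 3 (by decide)⟩
  | 2, 5, _ => ⟨6, [], Or.inl rfl, rfl⟩
  | 2, 6, _ => ⟨5, [], Or.inl rfl, by
      calc wp [2, 2, 1, 0, 2, 3] = wp [1, 0, 2, 3] := move_cancel [] [1, 0, 2, 3] 2⟩
  | 2, 7, _ => ⟨7, [2], Or.inr ⟨2, rfl, by decide⟩, by
      calc wp [2, 3, 2, 1, 0, 2, 3] = wp [3, 2, 3, 1, 0, 2, 3] := move_braid [] [1, 0, 2, 3] 2 3 (by decide)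
        _ = wp [3, 2, 1, 3, 0, 2, 3] := move_swap [3, 2] [0, 2, 3] 3 1 (by decide)
        _ = wp [3, 2, 1, 0, 3, 2, 3] := move_swap [3, 2, 1] [2, 3] 3 0 (by decide)
        _ = wp [3, 2, 1, 0, 2, 3, 2] := move_braid [3, 2, 1, 0] [] 3 2 (by decide)⟩
  | 3, 0, _ => ⟨0, [2], Or.inr ⟨2, rfl, by decide⟩, by
      calc wp [3, 1, 2, 3] = wp [1, 3, 2, 3] := move_swap [] [2, 3] 3 1 (by decide)
        _ = wp [1, 2, 3, 2] := move_braid [1] [] 3 2 (by decide)⟩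
  | 3, 1, _ => ⟨1, [2], Or.inr ⟨2, rfl, by decide⟩, by
      calc wp [3, 2, 3] = wp [2, 3, 2] := move_braid [] [] 3 2 (by decide)⟩
  | 3, 2, _ => ⟨3, [], Or.inl rfl, by
      calc wp [3, 3] = wp [] := move_cancel [] [] 3⟩
  | 3, 3, _ => ⟨2, [], Or.inl rfl, rfl⟩
  | 3, 4, _ => ⟨4, [2], Or.inr ⟨2, rfl, by decide⟩, by
      calc wp [3, 0, 2, 3] = wp [0, 3, 2, 3] := move_swap [] [2, 3] 3 0 (by decide)
        _ = wp [0, 2, 3, 2] := move_braid [0] [] 3 2 (by decide)⟩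
  | 3, 5, _ => ⟨5, [2], Or.inr ⟨2, rfl, by decide⟩, by
      calc wp [3, 1, 0, 2, 3] = wp [1, 3, 0, 2, 3] := move_swap [] [0, 2, 3] 3 1 (by decide)
        _ = wp [1, 0, 3, 2, 3] := move_swap [1] [2, 3] 3 0 (by decide)
        _ = wp [1, 0, 2, 3, 2] := move_braid [1, 0] [] 3 2 (by decide)⟩
  | 3, 6, _ => ⟨7, [], Or.inl rfl, rfl⟩
  | 3, 7, _ => ⟨6, [], Or.inl rfl, by
      calc wp [3, 3, 2, 1, 0, 2, 3] = wp [2, 1, 0, 2, 3] := move_cancel [] [2, 1, 0, 2, 3] 3⟩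
  | 4, _, hi => absurd hi (by decide)
  | 5, _, hi => absurd hi (by decide)

lemma key5 : ∀ (i : Fin 6) (r : Fin 10), i.val ≤ 4 →
    ∃ (r' : Fin 10) (t : List (Fin 6)),
      (t = [] ∨ ∃ k : Fin 6, t = [k] ∧ k.val ≤ 3) ∧
      wp (i :: lw5 r) = wp (lw5 r' ++ t)
  | 0, 0, _ => ⟨6, [], Or.inl rfl, by
      calc wp [0, 1, 2, 3, 4] = wp [1, 0, 2, 3, 4] := move_swap [] [2, 3, 4] 0 1 (by decide)⟩
  | 0, 1, _ => ⟨5, [], Or.inl rfl, rfl⟩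
  | 0, 2, _ => ⟨2, [0], Or.inr ⟨0, rfl, by decide⟩, by
      calc wp [0, 3, 4] = wp [3, 0, 4] := move_swap [] [4] 0 3 (by decide)
        _ = wp [3, 4, 0] := move_swap [3] [] 0 4 (by decide)⟩
  | 0, 3, _ => ⟨3, [0], Or.inr ⟨0, rfl, by decide⟩, by
      calc wp [0, 4] = wp [4, 0] := move_swap [] [] 0 4 (by decide)⟩
  | 0, 4, _ => ⟨4, [0], Or.inr ⟨0, rfl, by decide⟩, rfl⟩
  | 0, 5, _ => ⟨1, [], Or.inl rfl, by
      calc wp [0, 0, 2, 3, 4] = wp [2, 3, 4] := move_cancel [] [2, 3, 4] 0⟩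
  | 0, 6, _ => ⟨0, [], Or.inl rfl, by
      calc wp [0, 1, 0, 2, 3, 4] = wp [1, 0, 0, 2, 3, 4] := move_swap [] [0, 2, 3, 4] 0 1 (by decide)
        _ = wp [1, 2, 3, 4] := move_cancel [1] [2, 3, 4] 0⟩
  | 0, 7, _ => ⟨7, [1], Or.inr ⟨1, rfl, by decide⟩, by
      calc wp [0, 2, 1, 0, 2, 3, 4] = wp [0, 2, 0, 1, 2, 3, 4] := move_swap [0, 2] [2, 3, 4] 1 0 (by decide)
        _ = wp [2, 0, 2, 1, 2, 3, 4] := move_braid [] [1, 2, 3, 4] 0 2 (by decide)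
        _ = wp [2, 0, 1, 2, 1, 3, 4] := move_braid [2, 0] [3, 4] 2 1 (by decide)
        _ = wp [2, 1, 0, 2, 1, 3, 4] := move_swap [2] [2, 1, 3, 4] 0 1 (by decide)
        _ = wp [2, 1, 0, 2, 3, 1, 4] := move_swap [2, 1, 0, 2] [4] 1 3 (by decide)
        _ = wp [2, 1, 0, 2, 3, 4, 1] := move_swap [2, 1, 0, 2, 3] [] 1 4 (by decide)⟩
  | 0, 8, _ => ⟨8, [1], Or.inr ⟨1, rfl, by decide⟩, by
      calc wp [0, 3, 2, 1, 0, 2, 3, 4] = wp [3, 0, 2, 1, 0, 2, 3, 4] := move_swap [] [2, 1, 0, 2, 3, 4] 0 3 (by decide)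
        _ = wp [3, 0, 2, 0, 1, 2, 3, 4] := move_swap [3, 0, 2] [2, 3, 4] 1 0 (by decide)
        _ = wp [3, 2, 0, 2, 1, 2, 3, 4] := move_braid [3] [1, 2, 3, 4] 0 2 (by decide)
        _ = wp [3, 2, 0, 1, 2, 1, 3, 4] := move_braid [3, 2, 0] [3, 4] 2 1 (by decide)
        _ = wp [3, 2, 1, 0, 2, 1, 3, 4] := move_swap [3, 2] [2, 1, 3, 4] 0 1 (by decide)
        _ = wp [3, 2, 1, 0, 2, 3, 1, 4] := move_swap [3, 2, 1, 0, 2] [4] 1 3 (by decide)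
        _ = wp [3, 2, 1, 0, 2, 3, 4, 1] := move_swap [3, 2, 1, 0, 2, 3] [] 1 4 (by decide)⟩
  | 0, 9, _ => ⟨9, [1], Or.inr ⟨1, rfl, by decide⟩, by
      calc wp [0, 4, 3, 2, 1, 0, 2, 3, 4] = wp [4, 0, 3, 2, 1, 0, 2, 3, 4] := move_swap [] [3, 2, 1, 0, 2, 3, 4] 0 4 (by decide)
        _ = wp [4, 3, 0, 2, 1, 0, 2, 3, 4] := move_swap [4] [2, 1, 0, 2, 3, 4] 0 3 (by decide)
        _ = wp [4, 3, 0, 2, 0, 1, 2, 3, 4] := move_swap [4, 3, 0, 2] [2, 3, 4] 1 0 (by decide)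
        _ = wp [4, 3, 2, 0, 2, 1, 2, 3, 4] := move_braid [4, 3] [1, 2, 3, 4] 0 2 (by decide)
        _ = wp [4, 3, 2, 0, 1, 2, 1, 3, 4] := move_braid [4, 3, 2, 0] [3, 4] 2 1 (by decide)
        _ = wp [4, 3, 2, 1, 0, 2, 1, 3, 4] := move_swap [4, 3, 2] [2, 1, 3, 4] 0 1 (by decide)
        _ = wp [4, 3, 2, 1, 0, 2, 3, 1, 4] := move_swap [4, 3, 2, 1, 0, 2] [4] 1 3 (by decide)
        _ = wp [4, 3, 2, 1, 0, 2, 3, 4, 1] := move_swap [4, 3, 2, 1, 0, 2, 3] [] 1 4 (by decide)⟩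
  | 1, 0, _ => ⟨1, [], Or.inl rfl, by
      calc wp [1, 1, 2, 3, 4] = wp [2, 3, 4] := move_cancel [] [2, 3, 4] 1⟩
  | 1, 1, _ => ⟨0, [], Or.inl rfl, rfl⟩
  | 1, 2, _ => ⟨2, [1], Or.inr ⟨1, rfl, by decide⟩, by
      calc wp [1, 3, 4] = wp [3, 1, 4] := move_swap [] [4] 1 3 (by decide)
        _ = wp [3, 4, 1] := move_swap [3] [] 1 4 (by decide)⟩
  | 1, 3, _ => ⟨3, [1], Or.inr ⟨1, rfl, by decide⟩, by
      calc wp [1, 4] = wp [4, 1] := move_swap [] [] 1 4 (by decide)⟩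
  | 1, 4, _ => ⟨4, [1], Or.inr ⟨1, rfl, by decide⟩, rfl⟩
  | 1, 5, _ => ⟨6, [], Or.inl rfl, rfl⟩
  | 1, 6, _ => ⟨5, [], Or.inl rfl, by
      calc wp [1, 1, 0, 2, 3, 4] = wp [0, 2, 3, 4] := move_cancel [] [0, 2, 3, 4] 1⟩
  | 1, 7, _ => ⟨7, [0], Or.inr ⟨0, rfl, by decide⟩, by
      calc wp [1, 2, 1, 0, 2, 3, 4] = wp [2, 1, 2, 0, 2, 3, 4] := move_braid [] [0, 2, 3, 4] 1 2 (by decide)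
        _ = wp [2, 1, 0, 2, 0, 3, 4] := move_braid [2, 1] [3, 4] 2 0 (by decide)
        _ = wp [2, 1, 0, 2, 3, 0, 4] := move_swap [2, 1, 0, 2] [4] 0 3 (by decide)
        _ = wp [2, 1, 0, 2, 3, 4, 0] := move_swap [2, 1, 0, 2, 3] [] 0 4 (by decide)⟩
  | 1, 8, _ => ⟨8, [0], Or.inr ⟨0, rfl, by decide⟩, by
      calc wp [1, 3, 2, 1, 0, 2, 3, 4] = wp [3, 1, 2, 1, 0, 2, 3, 4] := move_swap [] [2, 1, 0, 2, 3, 4] 1 3 (by decide)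
        _ = wp [3, 2, 1, 2, 0, 2, 3, 4] := move_braid [3] [0, 2, 3, 4] 1 2 (by decide)
        _ = wp [3, 2, 1, 0, 2, 0, 3, 4] := move_braid [3, 2, 1] [3, 4] 2 0 (by decide)
        _ = wp [3, 2, 1, 0, 2, 3, 0, 4] := move_swap [3, 2, 1, 0, 2] [4] 0 3 (by decide)
        _ = wp [3, 2, 1, 0, 2, 3, 4, 0] := move_swap [3, 2, 1, 0, 2, 3] [] 0 4 (by decide)⟩
  | 1, 9, _ => ⟨9, [0], Or.inr ⟨0, rfl, by decide⟩, by
      calc wp [1, 4, 3, 2, 1, 0, 2, 3, 4] = wp [4, 1, 3, 2, 1, 0, 2, 3, 4] := move_swap [] [3, 2, 1, 0, 2, 3, 4] 1 4 (by decide)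
        _ = wp [4, 3, 1, 2, 1, 0, 2, 3, 4] := move_swap [4] [2, 1, 0, 2, 3, 4] 1 3 (by decide)
        _ = wp [4, 3, 2, 1, 2, 0, 2, 3, 4] := move_braid [4, 3] [0, 2, 3, 4] 1 2 (by decide)
        _ = wp [4, 3, 2, 1, 0, 2, 0, 3, 4] := move_braid [4, 3, 2, 1] [3, 4] 2 0 (by decide)
        _ = wp [4, 3, 2, 1, 0, 2, 3, 0, 4] := move_swap [4, 3, 2, 1, 0, 2] [4] 0 3 (by decide)
        _ = wp [4, 3, 2, 1, 0, 2, 3, 4, 0] := move_swap [4, 3, 2, 1, 0, 2, 3] [] 0 4 (by decide)⟩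
  | 2, 0, _ => ⟨0, [1], Or.inr ⟨1, rfl, by decide⟩, by
      calc wp [2, 1, 2, 3, 4] = wp [1, 2, 1, 3, 4] := move_braid [] [3, 4] 2 1 (by decide)
        _ = wp [1, 2, 3, 1, 4] := move_swap [1, 2] [4] 1 3 (by decide)
        _ = wp [1, 2, 3, 4, 1] := move_swap [1, 2, 3] [] 1 4 (by decide)⟩
  | 2, 1, _ => ⟨2, [], Or.inl rfl, by
      calc wp [2, 2, 3, 4] = wp [3, 4] := move_cancel [] [3, 4] 2⟩
  | 2, 2, _ => ⟨1, [], Or.inl rfl, rfl⟩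
  | 2, 3, _ => ⟨3, [2], Or.inr ⟨2, rfl, by decide⟩, by
      calc wp [2, 4] = wp [4, 2] := move_swap [] [] 2 4 (by decide)⟩
  | 2, 4, _ => ⟨4, [2], Or.inr ⟨2, rfl, by decide⟩, rfl⟩
  | 2, 5, _ => ⟨5, [0], Or.inr ⟨0, rfl, by decide⟩, by
      calc wp [2, 0, 2, 3, 4] = wp [0, 2, 0, 3, 4] := move_braid [] [3, 4] 2 0 (by decide)
        _ = wp [0, 2, 3, 0, 4] := move_swap [0, 2] [4] 0 3 (by decide)
        _ = wp [0, 2, 3, 4, 0] := move_swap [0, 2, 3] [] 0 4 (by decide)⟩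
  | 2, 6, _ => ⟨7, [], Or.inl rfl, rfl⟩
  | 2, 7, _ => ⟨6, [], Or.inl rfl, by
      calc wp [2, 2, 1, 0, 2, 3, 4] = wp [1, 0, 2, 3, 4] := move_cancel [] [1, 0, 2, 3, 4] 2⟩
  | 2, 8, _ => ⟨8, [2], Or.inr ⟨2, rfl, by decide⟩, by
      calc wp [2, 3, 2, 1, 0, 2, 3, 4] = wp [3, 2, 3, 1, 0, 2, 3, 4] := move_braid [] [1, 0, 2, 3, 4] 2 3 (by decide)
        _ = wp [3, 2, 1, 3, 0, 2, 3, 4] := move_swap [3, 2] [0, 2, 3, 4] 3 1 (by decide)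
        _ = wp [3, 2, 1, 0, 3, 2, 3, 4] := move_swap [3, 2, 1] [2, 3, 4] 3 0 (by decide)
        _ = wp [3, 2, 1, 0, 2, 3, 2, 4] := move_braid [3, 2, 1, 0] [4] 3 2 (by decide)
        _ = wp [3, 2, 1, 0, 2, 3, 4, 2] := move_swap [3, 2, 1, 0, 2, 3] [] 2 4 (by decide)⟩
  | 2, 9, _ => ⟨9, [2], Or.inr ⟨2, rfl, by decide⟩, by
      calc wp [2, 4, 3, 2, 1, 0, 2, 3, 4] = wp [4, 2, 3, 2, 1, 0, 2, 3, 4] := move_swap [] [3, 2, 1, 0, 2, 3, 4] 2 4 (by decide)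
        _ = wp [4, 3, 2, 3, 1, 0, 2, 3, 4] := move_braid [4] [1, 0, 2, 3, 4] 2 3 (by decide)
        _ = wp [4, 3, 2, 1, 3, 0, 2, 3, 4] := move_swap [4, 3, 2] [0, 2, 3, 4] 3 1 (by decide)
        _ = wp [4, 3, 2, 1, 0, 3, 2, 3, 4] := move_swap [4, 3, 2, 1] [2, 3, 4] 3 0 (by decide)
        _ = wp [4, 3, 2, 1, 0, 2, 3, 2, 4] := move_braid [4, 3, 2, 1, 0] [4] 3 2 (by decide)
        _ = wp [4, 3, 2, 1, 0, 2, 3, 4, 2] := move_swap [4, 3, 2, 1, 0, 2, 3] [] 2 4 (by decide)⟩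
  | 3, 0, _ => ⟨0, [2], Or.inr ⟨2, rfl, by decide⟩, by
      calc wp [3, 1, 2, 3, 4] = wp [1, 3, 2, 3, 4] := move_swap [] [2, 3, 4] 3 1 (by decide)
        _ = wp [1, 2, 3, 2, 4] := move_braid [1] [4] 3 2 (by decide)
        _ = wp [1, 2, 3, 4, 2] := move_swap [1, 2, 3] [] 2 4 (by decide)⟩
  | 3, 1, _ => ⟨1, [2], Or.inr ⟨2, rfl, by decide⟩, by
      calc wp [3, 2, 3, 4] = wp [2, 3, 2, 4] := move_braid [] [4] 3 2 (by decide)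
        _ = wp [2, 3, 4, 2] := move_swap [2, 3] [] 2 4 (by decide)⟩
  | 3, 2, _ => ⟨3, [], Or.inl rfl, by
      calc wp [3, 3, 4] = wp [4] := move_cancel [] [4] 3⟩
  | 3, 3, _ => ⟨2, [], Or.inl rfl, rfl⟩
  | 3, 4, _ => ⟨4, [3], Or.inr ⟨3, rfl, by decide⟩, rfl⟩
  | 3, 5, _ => ⟨5, [2], Or.inr ⟨2, rfl, by decide⟩, by
      calc wp [3, 0, 2, 3, 4] = wp [0, 3, 2, 3, 4] := move_swap [] [2, 3, 4] 3 0 (by decide)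
        _ = wp [0, 2, 3, 2, 4] := move_braid [0] [4] 3 2 (by decide)
        _ = wp [0, 2, 3, 4, 2] := move_swap [0, 2, 3] [] 2 4 (by decide)⟩
  | 3, 6, _ => ⟨6, [2], Or.inr ⟨2, rfl, by decide⟩, by
      calc wp [3, 1, 0, 2, 3, 4] = wp [1, 3, 0, 2, 3, 4] := move_swap [] [0, 2, 3, 4] 3 1 (by decide)
        _ = wp [1, 0, 3, 2, 3, 4] := move_swap [1] [2, 3, 4] 3 0 (by decide)
        _ = wp [1, 0, 2, 3, 2, 4] := move_braid [1, 0] [4] 3 2 (by decide)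
        _ = wp [1, 0, 2, 3, 4, 2] := move_swap [1, 0, 2, 3] [] 2 4 (by decide)⟩
  | 3, 7, _ => ⟨8, [], Or.inl rfl, rfl⟩
  | 3, 8, _ => ⟨7, [], Or.inl rfl, by
      calc wp [3, 3, 2, 1, 0, 2, 3, 4] = wp [2, 1, 0, 2, 3, 4] := move_cancel [] [2, 1, 0, 2, 3, 4] 3⟩
  | 3, 9, _ => ⟨9, [3], Or.inr ⟨3, rfl, by decide⟩, by
      calc wp [3, 4, 3, 2, 1, 0, 2, 3, 4] = wp [4, 3, 4, 2, 1, 0, 2, 3, 4] := move_braid [] [2, 1, 0, 2, 3, 4] 3 4 (by decide)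
        _ = wp [4, 3, 2, 4, 1, 0, 2, 3, 4] := move_swap [4, 3] [1, 0, 2, 3, 4] 4 2 (by decide)
        _ = wp [4, 3, 2, 1, 4, 0, 2, 3, 4] := move_swap [4, 3, 2] [0, 2, 3, 4] 4 1 (by decide)
        _ = wp [4, 3, 2, 1, 0, 4, 2, 3, 4] := move_swap [4, 3, 2, 1] [2, 3, 4] 4 0 (by decide)
        _ = wp [4, 3, 2, 1, 0, 2, 4, 3, 4] := move_swap [4, 3, 2, 1, 0] [3, 4] 4 2 (by decide)
        _ = wp [4, 3, 2, 1, 0, 2, 3, 4, 3] := move_braid [4, 3, 2, 1, 0, 2] [] 4 3 (by decide)⟩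
  | 4, 0, _ => ⟨0, [3], Or.inr ⟨3, rfl, by decide⟩, by
      calc wp [4, 1, 2, 3, 4] = wp [1, 4, 2, 3, 4] := move_swap [] [2, 3, 4] 4 1 (by decide)
        _ = wp [1, 2, 4, 3, 4] := move_swap [1] [3, 4] 4 2 (by decide)
        _ = wp [1, 2, 3, 4, 3] := move_braid [1, 2] [] 4 3 (by decide)⟩
  | 4, 1, _ => ⟨1, [3], Or.inr ⟨3, rfl, by decide⟩, by
      calc wp [4, 2, 3, 4] = wp [2, 4, 3, 4] := move_swap [] [3, 4] 4 2 (by decide)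
        _ = wp [2, 3, 4, 3] := move_braid [2] [] 4 3 (by decide)⟩
  | 4, 2, _ => ⟨2, [3], Or.inr ⟨3, rfl, by decide⟩, by
      calc wp [4, 3, 4] = wp [3, 4, 3] := move_braid [] [] 4 3 (by decide)⟩
  | 4, 3, _ => ⟨4, [], Or.inl rfl, by
      calc wp [4, 4] = wp [] := move_cancel [] [] 4⟩
  | 4, 4, _ => ⟨3, [], Or.inl rfl, rfl⟩
  | 4, 5, _ => ⟨5, [3], Or.inr ⟨3, rfl, by decide⟩, by
      calc wp [4, 0, 2, 3, 4] = wp [0, 4, 2, 3, 4] := move_swap [] [2, 3, 4] 4 0 (by decide)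
        _ = wp [0, 2, 4, 3, 4] := move_swap [0] [3, 4] 4 2 (by decide)
        _ = wp [0, 2, 3, 4, 3] := move_braid [0, 2] [] 4 3 (by decide)⟩
  | 4, 6, _ => ⟨6, [3], Or.inr ⟨3, rfl, by decide⟩, by
      calc wp [4, 1, 0, 2, 3, 4] = wp [1, 4, 0, 2, 3, 4] := move_swap [] [0, 2, 3, 4] 4 1 (by decide)
        _ = wp [1, 0, 4, 2, 3, 4] := move_swap [1] [2, 3, 4] 4 0 (by decide)
        _ = wp [1, 0, 2, 4, 3, 4] := move_swap [1, 0] [3, 4] 4 2 (by decide)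
        _ = wp [1, 0, 2, 3, 4, 3] := move_braid [1, 0, 2] [] 4 3 (by decide)⟩
  | 4, 7, _ => ⟨7, [3], Or.inr ⟨3, rfl, by decide⟩, by
      calc wp [4, 2, 1, 0, 2, 3, 4] = wp [2, 4, 1, 0, 2, 3, 4] := move_swap [] [1, 0, 2, 3, 4] 4 2 (by decide)
        _ = wp [2, 1, 4, 0, 2, 3, 4] := move_swap [2] [0, 2, 3, 4] 4 1 (by decide)
        _ = wp [2, 1, 0, 4, 2, 3, 4] := move_swap [2, 1] [2, 3, 4] 4 0 (by decide)
        _ = wp [2, 1, 0, 2, 4, 3, 4] := move_swap [2, 1, 0] [3, 4] 4 2 (by decide)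
        _ = wp [2, 1, 0, 2, 3, 4, 3] := move_braid [2, 1, 0, 2] [] 4 3 (by decide)⟩
  | 4, 8, _ => ⟨9, [], Or.inl rfl, rfl⟩
  | 4, 9, _ => ⟨8, [], Or.inl rfl, by
      calc wp [4, 4, 3, 2, 1, 0, 2, 3, 4] = wp [3, 2, 1, 0, 2, 3, 4] := move_cancel [] [3, 2, 1, 0, 2, 3, 4] 4⟩
  | 5, _, hi => absurd hi (by decide)

lemma key6 : ∀ (i : Fin 6) (r : Fin 12), i.val ≤ 5 →
    ∃ (r' : Fin 12) (t : List (Fin 6)),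
      (t = [] ∨ ∃ k : Fin 6, t = [k] ∧ k.val ≤ 4) ∧
      wp (i :: lw6 r) = wp (lw6 r' ++ t)
  | 0, 0, _ => ⟨7, [], Or.inl rfl, by
      calc wp [0, 1, 2, 3, 4, 5] = wp [1, 0, 2, 3, 4, 5] := move_swap [] [2, 3, 4, 5] 0 1 (by decide)⟩
  | 0, 1, _ => ⟨6, [], Or.inl rfl, rfl⟩
  | 0, 2, _ => ⟨2, [0], Or.inr ⟨0, rfl, by decide⟩, by
      calc wp [0, 3, 4, 5] = wp [3, 0, 4, 5] := move_swap [] [4, 5] 0 3 (by decide)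
        _ = wp [3, 4, 0, 5] := move_swap [3] [5] 0 4 (by decide)
        _ = wp [3, 4, 5, 0] := move_swap [3, 4] [] 0 5 (by decide)⟩
  | 0, 3, _ => ⟨3, [0], Or.inr ⟨0, rfl, by decide⟩, by
      calc wp [0, 4, 5] = wp [4, 0, 5] := move_swap [] [5] 0 4 (by decide)
        _ = wp [4, 5, 0] := move_swap [4] [] 0 5 (by decide)⟩
  | 0, 4, _ => ⟨4, [0], Or.inr ⟨0, rfl, by decide⟩, by
      calc wp [0, 5] = wp [5, 0] := move_swap [] [] 0 5 (by decide)⟩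
  | 0, 5, _ => ⟨5, [0], Or.inr ⟨0, rfl, by decide⟩, rfl⟩
  | 0, 6, _ => ⟨1, [], Or.inl rfl, by
      calc wp [0, 0, 2, 3, 4, 5] = wp [2, 3, 4, 5] := move_cancel [] [2, 3, 4, 5] 0⟩
  | 0, 7, _ => ⟨0, [], Or.inl rfl, by
      calc wp [0, 1, 0, 2, 3, 4, 5] = wp [1, 0, 0, 2, 3, 4, 5] := move_swap [] [0, 2, 3, 4, 5] 0 1 (by decide)
        _ = wp [1, 2, 3, 4, 5] := move_cancel [1] [2, 3, 4, 5] 0⟩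
  | 0, 8, _ => ⟨8, [1], Or.inr ⟨1, rfl, by decide⟩, by
      calc wp [0, 2, 1, 0, 2, 3, 4, 5] = wp [0, 2, 0, 1, 2, 3, 4, 5] := move_swap [0, 2] [2, 3, 4, 5] 1 0 (by decide)
        _ = wp [2, 0, 2, 1, 2, 3, 4, 5] := move_braid [] [1, 2, 3, 4, 5] 0 2 (by decide)
        _ = wp [2, 0, 1, 2, 1, 3, 4, 5] := move_braid [2, 0] [3, 4, 5] 2 1 (by decide)
        _ = wp [2, 1, 0, 2, 1, 3, 4, 5] := move_swap [2] [2, 1, 3, 4, 5] 0 1 (by decide)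
        _ = wp [2, 1, 0, 2, 3, 1, 4, 5] := move_swap [2, 1, 0, 2] [4, 5] 1 3 (by decide)
        _ = wp [2, 1, 0, 2, 3, 4, 1, 5] := move_swap [2, 1, 0, 2, 3] [5] 1 4 (by decide)
        _ = wp [2, 1, 0, 2, 3, 4, 5, 1] := move_swap [2, 1, 0, 2, 3, 4] [] 1 5 (by decide)⟩
  | 0, 9, _ => ⟨9, [1], Or.inr ⟨1, rfl, by decide⟩, by
      calc wp [0, 3, 2, 1, 0, 2, 3, 4, 5] = wp [3, 0, 2, 1, 0, 2, 3, 4, 5] := move_swap [] [2, 1, 0, 2, 3, 4, 5] 0 3 (by decide)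
        _ = wp [3, 0, 2, 0, 1, 2, 3, 4, 5] := move_swap [3, 0, 2] [2, 3, 4, 5] 1 0 (by decide)
        _ = wp [3, 2, 0, 2, 1, 2, 3, 4, 5] := move_braid [3] [1, 2, 3, 4, 5] 0 2 (by decide)
        _ = wp [3, 2, 0, 1, 2, 1, 3, 4, 5] := move_braid [3, 2, 0] [3, 4, 5] 2 1 (by decide)
        _ = wp [3, 2, 1, 0, 2, 1, 3, 4, 5] := move_swap [3, 2] [2, 1, 3, 4, 5] 0 1 (by decide)
        _ = wp [3, 2, 1, 0, 2, 3, 1, 4, 5] := move_swap [3, 2, 1, 0, 2] [4, 5] 1 3 (by decide)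
        _ = wp [3, 2, 1, 0, 2, 3, 4, 1, 5] := move_swap [3, 2, 1, 0, 2, 3] [5] 1 4 (by decide)
        _ = wp [3, 2, 1, 0, 2, 3, 4, 5, 1] := move_swap [3, 2, 1, 0, 2, 3, 4] [] 1 5 (by decide)⟩
  | 0, 10, _ => ⟨10, [1], Or.inr ⟨1, rfl, by decide⟩, by
      calc wp [0, 4, 3, 2, 1, 0, 2, 3, 4, 5] = wp [4, 0, 3, 2, 1, 0, 2, 3, 4, 5] := move_swap [] [3, 2, 1, 0, 2, 3, 4, 5] 0 4 (by decide)
        _ = wp [4, 3, 0, 2, 1, 0, 2, 3, 4, 5] := move_swap [4] [2, 1, 0, 2, 3, 4, 5] 0 3 (by decide)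
        _ = wp [4, 3, 0, 2, 0, 1, 2, 3, 4, 5] := move_swap [4, 3, 0, 2] [2, 3, 4, 5] 1 0 (by decide)
        _ = wp [4, 3, 2, 0, 2, 1, 2, 3, 4, 5] := move_braid [4, 3] [1, 2, 3, 4, 5] 0 2 (by decide)
        _ = wp [4, 3, 2, 0, 1, 2, 1, 3, 4, 5] := move_braid [4, 3, 2, 0] [3, 4, 5] 2 1 (by decide)
        _ = wp [4, 3, 2, 1, 0, 2, 1, 3, 4, 5] := move_swap [4, 3, 2] [2, 1, 3, 4, 5] 0 1 (by decide)
        _ = wp [4, 3, 2, 1, 0, 2, 3, 1, 4, 5] := move_swap [4, 3, 2, 1, 0, 2] [4, 5] 1 3 (by decide)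
        _ = wp [4, 3, 2, 1, 0, 2, 3, 4, 1, 5] := move_swap [4, 3, 2, 1, 0, 2, 3] [5] 1 4 (by decide)
        _ = wp [4, 3, 2, 1, 0, 2, 3, 4, 5, 1] := move_swap [4, 3, 2, 1, 0, 2, 3, 4] [] 1 5 (by decide)⟩
  | 0, 11, _ => ⟨11, [1], Or.inr ⟨1, rfl, by decide⟩, by
      calc wp [0, 5, 4, 3, 2, 1, 0, 2, 3, 4, 5] = wp [5, 0, 4, 3, 2, 1, 0, 2, 3, 4, 5] := move_swap [] [4, 3, 2, 1, 0, 2, 3, 4, 5] 0 5 (by decide)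
        _ = wp [5, 4, 0, 3, 2, 1, 0, 2, 3, 4, 5] := move_swap [5] [3, 2, 1, 0, 2, 3, 4, 5] 0 4 (by decide)
        _ = wp [5, 4, 3, 0, 2, 1, 0, 2, 3, 4, 5] := move_swap [5, 4] [2, 1, 0, 2, 3, 4, 5] 0 3 (by decide)
        _ = wp [5, 4, 3, 0, 2, 0, 1, 2, 3, 4, 5] := move_swap [5, 4, 3, 0, 2] [2, 3, 4, 5] 1 0 (by decide)
        _ = wp [5, 4, 3, 2, 0, 2, 1, 2, 3, 4, 5] := move_braid [5, 4, 3] [1, 2, 3, 4, 5] 0 2 (by decide)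
        _ = wp [5, 4, 3, 2, 0, 1, 2, 1, 3, 4, 5] := move_braid [5, 4, 3, 2, 0] [3, 4, 5] 2 1 (by decide)
        _ = wp [5, 4, 3, 2, 1, 0, 2, 1, 3, 4, 5] := move_swap [5, 4, 3, 2] [2, 1, 3, 4, 5] 0 1 (by decide)
        _ = wp [5, 4, 3, 2, 1, 0, 2, 3, 1, 4, 5] := move_swap [5, 4, 3, 2, 1, 0, 2] [4, 5] 1 3 (by decide)
        _ = wp [5, 4, 3, 2, 1, 0, 2, 3, 4, 1, 5] := move_swap [5, 4, 3, 2, 1, 0, 2, 3] [5] 1 4 (by decide)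
        _ = wp [5, 4, 3, 2, 1, 0, 2, 3, 4, 5, 1] := move_swap [5, 4, 3, 2, 1, 0, 2, 3, 4] [] 1 5 (by decide)⟩
  | 1, 0, _ => ⟨1, [], Or.inl rfl, by
      calc wp [1, 1, 2, 3, 4, 5] = wp [2, 3, 4, 5] := move_cancel [] [2, 3, 4, 5] 1⟩
  | 1, 1, _ => ⟨0, [], Or.inl rfl, rfl⟩
  | 1, 2, _ => ⟨2, [1], Or.inr ⟨1, rfl, by decide⟩, by
      calc wp [1, 3, 4, 5] = wp [3, 1, 4, 5] := move_swap [] [4, 5] 1 3 (by decide)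
        _ = wp [3, 4, 1, 5] := move_swap [3] [5] 1 4 (by decide)
        _ = wp [3, 4, 5, 1] := move_swap [3, 4] [] 1 5 (by decide)⟩
  | 1, 3, _ => ⟨3, [1], Or.inr ⟨1, rfl, by decide⟩, by
      calc wp [1, 4, 5] = wp [4, 1, 5] := move_swap [] [5] 1 4 (by decide)
        _ = wp [4, 5, 1] := move_swap [4] [] 1 5 (by decide)⟩
  | 1, 4, _ => ⟨4, [1], Or.inr ⟨1, rfl, by decide⟩, by
      calc wp [1, 5] = wp [5, 1] := move_swap [] [] 1 5 (by decide)⟩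
  | 1, 5, _ => ⟨5, [1], Or.inr ⟨1, rfl, by decide⟩, rfl⟩
  | 1, 6, _ => ⟨7, [], Or.inl rfl, rfl⟩
  | 1, 7, _ => ⟨6, [], Or.inl rfl, by
      calc wp [1, 1, 0, 2, 3, 4, 5] = wp [0, 2, 3, 4, 5] := move_cancel [] [0, 2, 3, 4, 5] 1⟩
  | 1, 8, _ => ⟨8, [0], Or.inr ⟨0, rfl, by decide⟩, by
      calc wp [1, 2, 1, 0, 2, 3, 4, 5] = wp [2, 1, 2, 0, 2, 3, 4, 5] := move_braid [] [0, 2, 3, 4, 5] 1 2 (by decide)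
        _ = wp [2, 1, 0, 2, 0, 3, 4, 5] := move_braid [2, 1] [3, 4, 5] 2 0 (by decide)
        _ = wp [2, 1, 0, 2, 3, 0, 4, 5] := move_swap [2, 1, 0, 2] [4, 5] 0 3 (by decide)
        _ = wp [2, 1, 0, 2, 3, 4, 0, 5] := move_swap [2, 1, 0, 2, 3] [5] 0 4 (by decide)
        _ = wp [2, 1, 0, 2, 3, 4, 5, 0] := move_swap [2, 1, 0, 2, 3, 4] [] 0 5 (by decide)⟩
  | 1, 9, _ => ⟨9, [0], Or.inr ⟨0, rfl, by decide⟩, by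
      calc wp [1, 3, 2, 1, 0, 2, 3, 4, 5] = wp [3, 1, 2, 1, 0, 2, 3, 4, 5] := move_swap [] [2, 1, 0, 2, 3, 4, 5] 1 3 (by decide)
        _ = wp [3, 2, 1, 2, 0, 2, 3, 4, 5] := move_braid [3] [0, 2, 3, 4, 5] 1 2 (by decide)
        _ = wp [3, 2, 1, 0, 2, 0, 3, 4, 5] := move_braid [3, 2, 1] [3, 4, 5] 2 0 (by decide)
        _ = wp [3, 2, 1, 0, 2, 3, 0, 4, 5] := move_swap [3, 2, 1, 0, 2] [4, 5] 0 3 (by decide)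
        _ = wp [3, 2, 1, 0, 2, 3, 4, 0, 5] := move_swap [3, 2, 1, 0, 2, 3] [5] 0 4 (by decide)
        _ = wp [3, 2, 1, 0, 2, 3, 4, 5, 0] := move_swap [3, 2, 1, 0, 2, 3, 4] [] 0 5 (by decide)⟩
  | 1, 10, _ => ⟨10, [0], Or.inr ⟨0, rfl, by decide⟩, by
      calc wp [1, 4, 3, 2, 1, 0, 2, 3, 4, 5] = wp [4, 1, 3, 2, 1, 0, 2, 3, 4, 5] := move_swap [] [3, 2, 1, 0, 2, 3, 4, 5] 1 4 (by decide)
        _ = wp [4, 3, 1, 2, 1, 0, 2, 3, 4, 5] := move_swap [4] [2, 1, 0, 2, 3, 4, 5] 1 3 (by decide)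
        _ = wp [4, 3, 2, 1, 2, 0, 2, 3, 4, 5] := move_braid [4, 3] [0, 2, 3, 4, 5] 1 2 (by decide)
        _ = wp [4, 3, 2, 1, 0, 2, 0, 3, 4, 5] := move_braid [4, 3, 2, 1] [3, 4, 5] 2 0 (by decide)
        _ = wp [4, 3, 2, 1, 0, 2, 3, 0, 4, 5] := move_swap [4, 3, 2, 1, 0, 2] [4, 5] 0 3 (by decide)
        _ = wp [4, 3, 2, 1, 0, 2, 3, 4, 0, 5] := move_swap [4, 3, 2, 1, 0, 2, 3] [5] 0 4 (by decide)
        _ = wp [4, 3, 2, 1, 0, 2, 3, 4, 5, 0] := move_swap [4, 3, 2, 1, 0, 2, 3, 4] [] 0 5 (by decide)⟩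
  | 1, 11, _ => ⟨11, [0], Or.inr ⟨0, rfl, by decide⟩, by
      calc wp [1, 5, 4, 3, 2, 1, 0, 2, 3, 4, 5] = wp [5, 1, 4, 3, 2, 1, 0, 2, 3, 4, 5] := move_swap [] [4, 3, 2, 1, 0, 2, 3, 4, 5] 1 5 (by decide)
        _ = wp [5, 4, 1, 3, 2, 1, 0, 2, 3, 4, 5] := move_swap [5] [3, 2, 1, 0, 2, 3, 4, 5] 1 4 (by decide)
        _ = wp [5, 4, 3, 1, 2, 1, 0, 2, 3, 4, 5] := move_swap [5, 4] [2, 1, 0, 2, 3, 4, 5] 1 3 (by decide)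
        _ = wp [5, 4, 3, 2, 1, 2, 0, 2, 3, 4, 5] := move_braid [5, 4, 3] [0, 2, 3, 4, 5] 1 2 (by decide)
        _ = wp [5, 4, 3, 2, 1, 0, 2, 0, 3, 4, 5] := move_braid [5, 4, 3, 2, 1] [3, 4, 5] 2 0 (by decide)
        _ = wp [5, 4, 3, 2, 1, 0, 2, 3, 0, 4, 5] := move_swap [5, 4, 3, 2, 1, 0, 2] [4, 5] 0 3 (by decide)
        _ = wp [5, 4, 3, 2, 1, 0, 2, 3, 4, 0, 5] := move_swap [5, 4, 3, 2, 1, 0, 2, 3] [5] 0 4 (by decide)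
        _ = wp [5, 4, 3, 2, 1, 0, 2, 3, 4, 5, 0] := move_swap [5, 4, 3, 2, 1, 0, 2, 3, 4] [] 0 5 (by decide)⟩
  | 2, 0, _ => ⟨0, [1], Or.inr ⟨1, rfl, by decide⟩, by
      calc wp [2, 1, 2, 3, 4, 5] = wp [1, 2, 1, 3, 4, 5] := move_braid [] [3, 4, 5] 2 1 (by decide)
        _ = wp [1, 2, 3, 1, 4, 5] := move_swap [1, 2] [4, 5] 1 3 (by decide)
        _ = wp [1, 2, 3, 4, 1, 5] := move_swap [1, 2, 3] [5] 1 4 (by decide)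
        _ = wp [1, 2, 3, 4, 5, 1] := move_swap [1, 2, 3, 4] [] 1 5 (by decide)⟩
  | 2, 1, _ => ⟨2, [], Or.inl rfl, by
      calc wp [2, 2, 3, 4, 5] = wp [3, 4, 5] := move_cancel [] [3, 4, 5] 2⟩
  | 2, 2, _ => ⟨1, [], Or.inl rfl, rfl⟩
  | 2, 3, _ => ⟨3, [2], Or.inr ⟨2, rfl, by decide⟩, by
      calc wp [2, 4, 5] = wp [4, 2, 5] := move_swap [] [5] 2 4 (by decide)
        _ = wp [4, 5, 2] := move_swap [4] [] 2 5 (by decide)⟩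
  | 2, 4, _ => ⟨4, [2], Or.inr ⟨2, rfl, by decide⟩, by
      calc wp [2, 5] = wp [5, 2] := move_swap [] [] 2 5 (by decide)⟩
  | 2, 5, _ => ⟨5, [2], Or.inr ⟨2, rfl, by decide⟩, rfl⟩
  | 2, 6, _ => ⟨6, [0], Or.inr ⟨0, rfl, by decide⟩, by
      calc wp [2, 0, 2, 3, 4, 5] = wp [0, 2, 0, 3, 4, 5] := move_braid [] [3, 4, 5] 2 0 (by decide)
        _ = wp [0, 2, 3, 0, 4, 5] := move_swap [0, 2] [4, 5] 0 3 (by decide)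
        _ = wp [0, 2, 3, 4, 0, 5] := move_swap [0, 2, 3] [5] 0 4 (by decide)
        _ = wp [0, 2, 3, 4, 5, 0] := move_swap [0, 2, 3, 4] [] 0 5 (by decide)⟩
  | 2, 7, _ => ⟨8, [], Or.inl rfl, rfl⟩
  | 2, 8, _ => ⟨7, [], Or.inl rfl, by
      calc wp [2, 2, 1, 0, 2, 3, 4, 5] = wp [1, 0, 2, 3, 4, 5] := move_cancel [] [1, 0, 2, 3, 4, 5] 2⟩
  | 2, 9, _ => ⟨9, [2], Or.inr ⟨2, rfl, by decide⟩, by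
      calc wp [2, 3, 2, 1, 0, 2, 3, 4, 5] = wp [3, 2, 3, 1, 0, 2, 3, 4, 5] := move_braid [] [1, 0, 2, 3, 4, 5] 2 3 (by decide)
        _ = wp [3, 2, 1, 3, 0, 2, 3, 4, 5] := move_swap [3, 2] [0, 2, 3, 4, 5] 3 1 (by decide)
        _ = wp [3, 2, 1, 0, 3, 2, 3, 4, 5] := move_swap [3, 2, 1] [2, 3, 4, 5] 3 0 (by decide)
        _ = wp [3, 2, 1, 0, 2, 3, 2, 4, 5] := move_braid [3, 2, 1, 0] [4, 5] 3 2 (by decide)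
        _ = wp [3, 2, 1, 0, 2, 3, 4, 2, 5] := move_swap [3, 2, 1, 0, 2, 3] [5] 2 4 (by decide)
        _ = wp [3, 2, 1, 0, 2, 3, 4, 5, 2] := move_swap [3, 2, 1, 0, 2, 3, 4] [] 2 5 (by decide)⟩
  | 2, 10, _ => ⟨10, [2], Or.inr ⟨2, rfl, by decide⟩, by
      calc wp [2, 4, 3, 2, 1, 0, 2, 3, 4, 5] = wp [4, 2, 3, 2, 1, 0, 2, 3, 4, 5] := move_swap [] [3, 2, 1, 0, 2, 3, 4, 5] 2 4 (by decide)
        _ = wp [4, 3, 2, 3, 1, 0, 2, 3, 4, 5] := move_braid [4] [1, 0, 2, 3, 4, 5] 2 3 (by decide)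
        _ = wp [4, 3, 2, 1, 3, 0, 2, 3, 4, 5] := move_swap [4, 3, 2] [0, 2, 3, 4, 5] 3 1 (by decide)
        _ = wp [4, 3, 2, 1, 0, 3, 2, 3, 4, 5] := move_swap [4, 3, 2, 1] [2, 3, 4, 5] 3 0 (by decide)
        _ = wp [4, 3, 2, 1, 0, 2, 3, 2, 4, 5] := move_braid [4, 3, 2, 1, 0] [4, 5] 3 2 (by decide)
        _ = wp [4, 3, 2, 1, 0, 2, 3, 4, 2, 5] := move_swap [4, 3, 2, 1, 0, 2, 3] [5] 2 4 (by decide)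
        _ = wp [4, 3, 2, 1, 0, 2, 3, 4, 5, 2] := move_swap [4, 3, 2, 1, 0, 2, 3, 4] [] 2 5 (by decide)⟩
  | 2, 11, _ => ⟨11, [2], Or.inr ⟨2, rfl, by decide⟩, by
      calc wp [2, 5, 4, 3, 2, 1, 0, 2, 3, 4, 5] = wp [5, 2, 4, 3, 2, 1, 0, 2, 3, 4, 5] := move_swap [] [4, 3, 2, 1, 0, 2, 3, 4, 5] 2 5 (by decide)
        _ = wp [5, 4, 2, 3, 2, 1, 0, 2, 3, 4, 5] := move_swap [5] [3, 2, 1, 0, 2, 3, 4, 5] 2 4 (by decide)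
        _ = wp [5, 4, 3, 2, 3, 1, 0, 2, 3, 4, 5] := move_braid [5, 4] [1, 0, 2, 3, 4, 5] 2 3 (by decide)
        _ = wp [5, 4, 3, 2, 1, 3, 0, 2, 3, 4, 5] := move_swap [5, 4, 3, 2] [0, 2, 3, 4, 5] 3 1 (by decide)
        _ = wp [5, 4, 3, 2, 1, 0, 3, 2, 3, 4, 5] := move_swap [5, 4, 3, 2, 1] [2, 3, 4, 5] 3 0 (by decide)
        _ = wp [5, 4, 3, 2, 1, 0, 2, 3, 2, 4, 5] := move_braid [5, 4, 3, 2, 1, 0] [4, 5] 3 2 (by decide)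
        _ = wp [5, 4, 3, 2, 1, 0, 2, 3, 4, 2, 5] := move_swap [5, 4, 3, 2, 1, 0, 2, 3] [5] 2 4 (by decide)
        _ = wp [5, 4, 3, 2, 1, 0, 2, 3, 4, 5, 2] := move_swap [5, 4, 3, 2, 1, 0, 2, 3, 4] [] 2 5 (by decide)⟩
  | 3, 0, _ => ⟨0, [2], Or.inr ⟨2, rfl, by decide⟩, by
      calc wp [3, 1, 2, 3, 4, 5] = wp [1, 3, 2, 3, 4, 5] := move_swap [] [2, 3, 4, 5] 3 1 (by decide)
        _ = wp [1, 2, 3, 2, 4, 5] := move_braid [1] [4, 5] 3 2 (by decide)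
        _ = wp [1, 2, 3, 4, 2, 5] := move_swap [1, 2, 3] [5] 2 4 (by decide)
        _ = wp [1, 2, 3, 4, 5, 2] := move_swap [1, 2, 3, 4] [] 2 5 (by decide)⟩
  | 3, 1, _ => ⟨1, [2], Or.inr ⟨2, rfl, by decide⟩, by
      calc wp [3, 2, 3, 4, 5] = wp [2, 3, 2, 4, 5] := move_braid [] [4, 5] 3 2 (by decide)
        _ = wp [2, 3, 4, 2, 5] := move_swap [2, 3] [5] 2 4 (by decide)
        _ = wp [2, 3, 4, 5, 2] := move_swap [2, 3, 4] [] 2 5 (by decide)⟩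
  | 3, 2, _ => ⟨3, [], Or.inl rfl, by
      calc wp [3, 3, 4, 5] = wp [4, 5] := move_cancel [] [4, 5] 3⟩
  | 3, 3, _ => ⟨2, [], Or.inl rfl, rfl⟩
  | 3, 4, _ => ⟨4, [3], Or.inr ⟨3, rfl, by decide⟩, by
      calc wp [3, 5] = wp [5, 3] := move_swap [] [] 3 5 (by decide)⟩
  | 3, 5, _ => ⟨5, [3], Or.inr ⟨3, rfl, by decide⟩, rfl⟩
  | 3, 6, _ => ⟨6, [2], Or.inr ⟨2, rfl, by decide⟩, by
      calc wp [3, 0, 2, 3, 4, 5] = wp [0, 3, 2, 3, 4, 5] := move_swap [] [2, 3, 4, 5] 3 0 (by decide)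
        _ = wp [0, 2, 3, 2, 4, 5] := move_braid [0] [4, 5] 3 2 (by decide)
        _ = wp [0, 2, 3, 4, 2, 5] := move_swap [0, 2, 3] [5] 2 4 (by decide)
        _ = wp [0, 2, 3, 4, 5, 2] := move_swap [0, 2, 3, 4] [] 2 5 (by decide)⟩
  | 3, 7, _ => ⟨7, [2], Or.inr ⟨2, rfl, by decide⟩, by
      calc wp [3, 1, 0, 2, 3, 4, 5] = wp [1, 3, 0, 2, 3, 4, 5] := move_swap [] [0, 2, 3, 4, 5] 3 1 (by decide)
        _ = wp [1, 0, 3, 2, 3, 4, 5] := move_swap [1] [2, 3, 4, 5] 3 0 (by decide)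
        _ = wp [1, 0, 2, 3, 2, 4, 5] := move_braid [1, 0] [4, 5] 3 2 (by decide)
        _ = wp [1, 0, 2, 3, 4, 2, 5] := move_swap [1, 0, 2, 3] [5] 2 4 (by decide)
        _ = wp [1, 0, 2, 3, 4, 5, 2] := move_swap [1, 0, 2, 3, 4] [] 2 5 (by decide)⟩
  | 3, 8, _ => ⟨9, [], Or.inl rfl, rfl⟩
  | 3, 9, _ => ⟨8, [], Or.inl rfl, by
      calc wp [3, 3, 2, 1, 0, 2, 3, 4, 5] = wp [2, 1, 0, 2, 3, 4, 5] := move_cancel [] [2, 1, 0, 2, 3, 4, 5] 3⟩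
  | 3, 10, _ => ⟨10, [3], Or.inr ⟨3, rfl, by decide⟩, by
      calc wp [3, 4, 3, 2, 1, 0, 2, 3, 4, 5] = wp [4, 3, 4, 2, 1, 0, 2, 3, 4, 5] := move_braid [] [2, 1, 0, 2, 3, 4, 5] 3 4 (by decide)
        _ = wp [4, 3, 2, 4, 1, 0, 2, 3, 4, 5] := move_swap [4, 3] [1, 0, 2, 3, 4, 5] 4 2 (by decide)
        _ = wp [4, 3, 2, 1, 4, 0, 2, 3, 4, 5] := move_swap [4, 3, 2] [0, 2, 3, 4, 5] 4 1 (by decide)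
        _ = wp [4, 3, 2, 1, 0, 4, 2, 3, 4, 5] := move_swap [4, 3, 2, 1] [2, 3, 4, 5] 4 0 (by decide)
        _ = wp [4, 3, 2, 1, 0, 2, 4, 3, 4, 5] := move_swap [4, 3, 2, 1, 0] [3, 4, 5] 4 2 (by decide)
        _ = wp [4, 3, 2, 1, 0, 2, 3, 4, 3, 5] := move_braid [4, 3, 2, 1, 0, 2] [5] 4 3 (by decide)
        _ = wp [4, 3, 2, 1, 0, 2, 3, 4, 5, 3] := move_swap [4, 3, 2, 1, 0, 2, 3, 4] [] 3 5 (by decide)⟩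
  | 3, 11, _ => ⟨11, [3], Or.inr ⟨3, rfl, by decide⟩, by
      calc wp [3, 5, 4, 3, 2, 1, 0, 2, 3, 4, 5] = wp [5, 3, 4, 3, 2, 1, 0, 2, 3, 4, 5] := move_swap [] [4, 3, 2, 1, 0, 2, 3, 4, 5] 3 5 (by decide)
        _ = wp [5, 4, 3, 4, 2, 1, 0, 2, 3, 4, 5] := move_braid [5] [2, 1, 0, 2, 3, 4, 5] 3 4 (by decide)
        _ = wp [5, 4, 3, 2, 4, 1, 0, 2, 3, 4, 5] := move_swap [5, 4, 3] [1, 0, 2, 3, 4, 5] 4 2 (by decide)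
        _ = wp [5, 4, 3, 2, 1, 4, 0, 2, 3, 4, 5] := move_swap [5, 4, 3, 2] [0, 2, 3, 4, 5] 4 1 (by decide)
        _ = wp [5, 4, 3, 2, 1, 0, 4, 2, 3, 4, 5] := move_swap [5, 4, 3, 2, 1] [2, 3, 4, 5] 4 0 (by decide)
        _ = wp [5, 4, 3, 2, 1, 0, 2, 4, 3, 4, 5] := move_swap [5, 4, 3, 2, 1, 0] [3, 4, 5] 4 2 (by decide)
        _ = wp [5, 4, 3, 2, 1, 0, 2, 3, 4, 3, 5] := move_braid [5, 4, 3, 2, 1, 0, 2] [5] 4 3 (by decide)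
        _ = wp [5, 4, 3, 2, 1, 0, 2, 3, 4, 5, 3] := move_swap [5, 4, 3, 2, 1, 0, 2, 3, 4] [] 3 5 (by decide)⟩
  | 4, 0, _ => ⟨0, [3], Or.inr ⟨3, rfl, by decide⟩, by
      calc wp [4, 1, 2, 3, 4, 5] = wp [1, 4, 2, 3, 4, 5] := move_swap [] [2, 3, 4, 5] 4 1 (by decide)
        _ = wp [1, 2, 4, 3, 4, 5] := move_swap [1] [3, 4, 5] 4 2 (by decide)
        _ = wp [1, 2, 3, 4, 3, 5] := move_braid [1, 2] [5] 4 3 (by decide)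
        _ = wp [1, 2, 3, 4, 5, 3] := move_swap [1, 2, 3, 4] [] 3 5 (by decide)⟩
  | 4, 1, _ => ⟨1, [3], Or.inr ⟨3, rfl, by decide⟩, by
      calc wp [4, 2, 3, 4, 5] = wp [2, 4, 3, 4, 5] := move_swap [] [3, 4, 5] 4 2 (by decide)
        _ = wp [2, 3, 4, 3, 5] := move_braid [2] [5] 4 3 (by decide)
        _ = wp [2, 3, 4, 5, 3] := move_swap [2, 3, 4] [] 3 5 (by decide)⟩
  | 4, 2, _ => ⟨2, [3], Or.inr ⟨3, rfl, by decide⟩, by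
      calc wp [4, 3, 4, 5] = wp [3, 4, 3, 5] := move_braid [] [5] 4 3 (by decide)
        _ = wp [3, 4, 5, 3] := move_swap [3, 4] [] 3 5 (by decide)⟩
  | 4, 3, _ => ⟨4, [], Or.inl rfl, by
      calc wp [4, 4, 5] = wp [5] := move_cancel [] [5] 4⟩
  | 4, 4, _ => ⟨3, [], Or.inl rfl, rfl⟩
  | 4, 5, _ => ⟨5, [4], Or.inr ⟨4, rfl, by decide⟩, rfl⟩
  | 4, 6, _ => ⟨6, [3], Or.inr ⟨3, rfl, by decide⟩, by
      calc wp [4, 0, 2, 3, 4, 5] = wp [0, 4, 2, 3, 4, 5] := move_swap [] [2, 3, 4, 5] 4 0 (by decide)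
        _ = wp [0, 2, 4, 3, 4, 5] := move_swap [0] [3, 4, 5] 4 2 (by decide)
        _ = wp [0, 2, 3, 4, 3, 5] := move_braid [0, 2] [5] 4 3 (by decide)
        _ = wp [0, 2, 3, 4, 5, 3] := move_swap [0, 2, 3, 4] [] 3 5 (by decide)⟩
  | 4, 7, _ => ⟨7, [3], Or.inr ⟨3, rfl, by decide⟩, by
      calc wp [4, 1, 0, 2, 3, 4, 5] = wp [1, 4, 0, 2, 3, 4, 5] := move_swap [] [0, 2, 3, 4, 5] 4 1 (by decide)
        _ = wp [1, 0, 4, 2, 3, 4, 5] := move_swap [1] [2, 3, 4, 5] 4 0 (by decide)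
        _ = wp [1, 0, 2, 4, 3, 4, 5] := move_swap [1, 0] [3, 4, 5] 4 2 (by decide)
        _ = wp [1, 0, 2, 3, 4, 3, 5] := move_braid [1, 0, 2] [5] 4 3 (by decide)
        _ = wp [1, 0, 2, 3, 4, 5, 3] := move_swap [1, 0, 2, 3, 4] [] 3 5 (by decide)⟩
  | 4, 8, _ => ⟨8, [3], Or.inr ⟨3, rfl, by decide⟩, by
      calc wp [4, 2, 1, 0, 2, 3, 4, 5] = wp [2, 4, 1, 0, 2, 3, 4, 5] := move_swap [] [1, 0, 2, 3, 4, 5] 4 2 (by decide)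
        _ = wp [2, 1, 4, 0, 2, 3, 4, 5] := move_swap [2] [0, 2, 3, 4, 5] 4 1 (by decide)
        _ = wp [2, 1, 0, 4, 2, 3, 4, 5] := move_swap [2, 1] [2, 3, 4, 5] 4 0 (by decide)
        _ = wp [2, 1, 0, 2, 4, 3, 4, 5] := move_swap [2, 1, 0] [3, 4, 5] 4 2 (by decide)
        _ = wp [2, 1, 0, 2, 3, 4, 3, 5] := move_braid [2, 1, 0, 2] [5] 4 3 (by decide)
        _ = wp [2, 1, 0, 2, 3, 4, 5, 3] := move_swap [2, 1, 0, 2, 3, 4] [] 3 5 (by decide)⟩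
  | 4, 9, _ => ⟨10, [], Or.inl rfl, rfl⟩
  | 4, 10, _ => ⟨9, [], Or.inl rfl, by
      calc wp [4, 4, 3, 2, 1, 0, 2, 3, 4, 5] = wp [3, 2, 1, 0, 2, 3, 4, 5] := move_cancel [] [3, 2, 1, 0, 2, 3, 4, 5] 4⟩
  | 4, 11, _ => ⟨11, [4], Or.inr ⟨4, rfl, by decide⟩, by
      calc wp [4, 5, 4, 3, 2, 1, 0, 2, 3, 4, 5] = wp [5, 4, 5, 3, 2, 1, 0, 2, 3, 4, 5] := move_braid [] [3, 2, 1, 0, 2, 3, 4, 5] 4 5 (by decide)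
        _ = wp [5, 4, 3, 5, 2, 1, 0, 2, 3, 4, 5] := move_swap [5, 4] [2, 1, 0, 2, 3, 4, 5] 5 3 (by decide)
        _ = wp [5, 4, 3, 2, 5, 1, 0, 2, 3, 4, 5] := move_swap [5, 4, 3] [1, 0, 2, 3, 4, 5] 5 2 (by decide)
        _ = wp [5, 4, 3, 2, 1, 5, 0, 2, 3, 4, 5] := move_swap [5, 4, 3, 2] [0, 2, 3, 4, 5] 5 1 (by decide)
        _ = wp [5, 4, 3, 2, 1, 0, 5, 2, 3, 4, 5] := move_swap [5, 4, 3, 2, 1] [2, 3, 4, 5] 5 0 (by decide)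
        _ = wp [5, 4, 3, 2, 1, 0, 2, 5, 3, 4, 5] := move_swap [5, 4, 3, 2, 1, 0] [3, 4, 5] 5 2 (by decide)
        _ = wp [5, 4, 3, 2, 1, 0, 2, 3, 5, 4, 5] := move_swap [5, 4, 3, 2, 1, 0, 2] [4, 5] 5 3 (by decide)
        _ = wp [5, 4, 3, 2, 1, 0, 2, 3, 4, 5, 4] := move_braid [5, 4, 3, 2, 1, 0, 2, 3] [] 5 4 (by decide)⟩
  | 5, 0, _ => ⟨0, [4], Or.inr ⟨4, rfl, by decide⟩, by
      calc wp [5, 1, 2, 3, 4, 5] = wp [1, 5, 2, 3, 4, 5] := move_swap [] [2, 3, 4, 5] 5 1 (by decide)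
        _ = wp [1, 2, 5, 3, 4, 5] := move_swap [1] [3, 4, 5] 5 2 (by decide)
        _ = wp [1, 2, 3, 5, 4, 5] := move_swap [1, 2] [4, 5] 5 3 (by decide)
        _ = wp [1, 2, 3, 4, 5, 4] := move_braid [1, 2, 3] [] 5 4 (by decide)⟩
  | 5, 1, _ => ⟨1, [4], Or.inr ⟨4, rfl, by decide⟩, by
      calc wp [5, 2, 3, 4, 5] = wp [2, 5, 3, 4, 5] := move_swap [] [3, 4, 5] 5 2 (by decide)
        _ = wp [2, 3, 5, 4, 5] := move_swap [2] [4, 5] 5 3 (by decide)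
        _ = wp [2, 3, 4, 5, 4] := move_braid [2, 3] [] 5 4 (by decide)⟩
  | 5, 2, _ => ⟨2, [4], Or.inr ⟨4, rfl, by decide⟩, by
      calc wp [5, 3, 4, 5] = wp [3, 5, 4, 5] := move_swap [] [4, 5] 5 3 (by decide)
        _ = wp [3, 4, 5, 4] := move_braid [3] [] 5 4 (by decide)⟩
  | 5, 3, _ => ⟨3, [4], Or.inr ⟨4, rfl, by decide⟩, by
      calc wp [5, 4, 5] = wp [4, 5, 4] := move_braid [] [] 5 4 (by decide)⟩
  | 5, 4, _ => ⟨5, [], Or.inl rfl, by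
      calc wp [5, 5] = wp [] := move_cancel [] [] 5⟩
  | 5, 5, _ => ⟨4, [], Or.inl rfl, rfl⟩
  | 5, 6, _ => ⟨6, [4], Or.inr ⟨4, rfl, by decide⟩, by
      calc wp [5, 0, 2, 3, 4, 5] = wp [0, 5, 2, 3, 4, 5] := move_swap [] [2, 3, 4, 5] 5 0 (by decide)
        _ = wp [0, 2, 5, 3, 4, 5] := move_swap [0] [3, 4, 5] 5 2 (by decide)
        _ = wp [0, 2, 3, 5, 4, 5] := move_swap [0, 2] [4, 5] 5 3 (by decide)
        _ = wp [0, 2, 3, 4, 5, 4] := move_braid [0, 2, 3] [] 5 4 (by decide)⟩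
  | 5, 7, _ => ⟨7, [4], Or.inr ⟨4, rfl, by decide⟩, by
      calc wp [5, 1, 0, 2, 3, 4, 5] = wp [1, 5, 0, 2, 3, 4, 5] := move_swap [] [0, 2, 3, 4, 5] 5 1 (by decide)
        _ = wp [1, 0, 5, 2, 3, 4, 5] := move_swap [1] [2, 3, 4, 5] 5 0 (by decide)
        _ = wp [1, 0, 2, 5, 3, 4, 5] := move_swap [1, 0] [3, 4, 5] 5 2 (by decide)
        _ = wp [1, 0, 2, 3, 5, 4, 5] := move_swap [1, 0, 2] [4, 5] 5 3 (by decide)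
        _ = wp [1, 0, 2, 3, 4, 5, 4] := move_braid [1, 0, 2, 3] [] 5 4 (by decide)⟩
  | 5, 8, _ => ⟨8, [4], Or.inr ⟨4, rfl, by decide⟩, by
      calc wp [5, 2, 1, 0, 2, 3, 4, 5] = wp [2, 5, 1, 0, 2, 3, 4, 5] := move_swap [] [1, 0, 2, 3, 4, 5] 5 2 (by decide)
        _ = wp [2, 1, 5, 0, 2, 3, 4, 5] := move_swap [2] [0, 2, 3, 4, 5] 5 1 (by decide)
        _ = wp [2, 1, 0, 5, 2, 3, 4, 5] := move_swap [2, 1] [2, 3, 4, 5] 5 0 (by decide)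
        _ = wp [2, 1, 0, 2, 5, 3, 4, 5] := move_swap [2, 1, 0] [3, 4, 5] 5 2 (by decide)
        _ = wp [2, 1, 0, 2, 3, 5, 4, 5] := move_swap [2, 1, 0, 2] [4, 5] 5 3 (by decide)
        _ = wp [2, 1, 0, 2, 3, 4, 5, 4] := move_braid [2, 1, 0, 2, 3] [] 5 4 (by decide)⟩
  | 5, 9, _ => ⟨9, [4], Or.inr ⟨4, rfl, by decide⟩, by
      calc wp [5, 3, 2, 1, 0, 2, 3, 4, 5] = wp [3, 5, 2, 1, 0, 2, 3, 4, 5] := move_swap [] [2, 1, 0, 2, 3, 4, 5] 5 3 (by decide)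
        _ = wp [3, 2, 5, 1, 0, 2, 3, 4, 5] := move_swap [3] [1, 0, 2, 3, 4, 5] 5 2 (by decide)
        _ = wp [3, 2, 1, 5, 0, 2, 3, 4, 5] := move_swap [3, 2] [0, 2, 3, 4, 5] 5 1 (by decide)
        _ = wp [3, 2, 1, 0, 5, 2, 3, 4, 5] := move_swap [3, 2, 1] [2, 3, 4, 5] 5 0 (by decide)
        _ = wp [3, 2, 1, 0, 2, 5, 3, 4, 5] := move_swap [3, 2, 1, 0] [3, 4, 5] 5 2 (by decide)
        _ = wp [3, 2, 1, 0, 2, 3, 5, 4, 5] := move_swap [3, 2, 1, 0, 2] [4, 5] 5 3 (by decide)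
        _ = wp [3, 2, 1, 0, 2, 3, 4, 5, 4] := move_braid [3, 2, 1, 0, 2, 3] [] 5 4 (by decide)⟩
  | 5, 10, _ => ⟨11, [], Or.inl rfl, rfl⟩
  | 5, 11, _ => ⟨10, [], Or.inl rfl, by
      calc wp [5, 5, 4, 3, 2, 1, 0, 2, 3, 4, 5] = wp [4, 3, 2, 1, 0, 2, 3, 4, 5] := move_cancel [] [4, 3, 2, 1, 0, 2, 3, 4, 5] 5⟩

def M2tbl : Fin 4 → Matrix (Fin 7) (Fin 7) ℤ
  | 0 => !![1, 0, 0, 0, 0, 0, 0; 0, 0, 1, 0, 0, 0, 0; 0, 1, 0, 0, 0, 0, 0; 0, 0, 0, 1, 0, 0, 0; 0, 0, 0, 0, 1, 0, 0; 0, 0, 0, 0, 0, 1, 0; 0, 0, 0, 0, 0, 0, 1]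
  | 1 => !![1, 0, 0, 0, 0, 0, 0; 0, 1, 0, 0, 0, 0, 0; 0, 0, 1, 0, 0, 0, 0; 0, 0, 0, 1, 0, 0, 0; 0, 0, 0, 0, 1, 0, 0; 0, 0, 0, 0, 0, 1, 0; 0, 0, 0, 0, 0, 0, 1]
  | 2 => !![1, 1, 1, 0, 0, 0, 0; 0, 0, -1, 0, 0, 0, 0; 0, -1, 0, 0, 0, 0, 0; 0, 0, 0, 1, 0, 0, 0; 0, 0, 0, 0, 1, 0, 0; 0, 0, 0, 0, 0, 1, 0; 0, 0, 0, 0, 0, 0, 1]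
  | 3 => !![1, 1, 1, 0, 0, 0, 0; 0, -1, 0, 0, 0, 0, 0; 0, 0, -1, 0, 0, 0, 0; 0, 0, 0, 1, 0, 0, 0; 0, 0, 0, 0, 1, 0, 0; 0, 0, 0, 0, 0, 1, 0; 0, 0, 0, 0, 0, 0, 1]
def N2tbl : Fin 4 → Matrix (Fin 7) (Fin 7) ℤ
  | 0 => !![1, 0, 0, 0, 0, 0, 0; 0, 0, 1, 0, 0, 0, 0; 0, 1, 0, 0, 0, 0, 0; 0, 0, 0, 1, 0, 0, 0; 0, 0, 0, 0, 1, 0, 0; 0, 0, 0, 0, 0, 1, 0; 0, 0, 0, 0, 0, 0, 1]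
  | 1 => !![1, 0, 0, 0, 0, 0, 0; 0, 1, 0, 0, 0, 0, 0; 0, 0, 1, 0, 0, 0, 0; 0, 0, 0, 1, 0, 0, 0; 0, 0, 0, 0, 1, 0, 0; 0, 0, 0, 0, 0, 1, 0; 0, 0, 0, 0, 0, 0, 1]
  | 2 => !![1, 1, 1, 0, 0, 0, 0; 0, 0, -1, 0, 0, 0, 0; 0, -1, 0, 0, 0, 0, 0; 0, 0, 0, 1, 0, 0, 0; 0, 0, 0, 0, 1, 0, 0; 0, 0, 0, 0, 0, 1, 0; 0, 0, 0, 0, 0, 0, 1]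
  | 3 => !![1, 1, 1, 0, 0, 0, 0; 0, -1, 0, 0, 0, 0, 0; 0, 0, -1, 0, 0, 0, 0; 0, 0, 0, 1, 0, 0, 0; 0, 0, 0, 0, 1, 0, 0; 0, 0, 0, 0, 0, 1, 0; 0, 0, 0, 0, 0, 0, 1]

def M3tbl : Fin 6 → Matrix (Fin 7) (Fin 7) ℤ
  | 0 => !![1, 0, 0, 0, 0, 0, 0; 0, 0, 0, 1, 0, 0, 0; 0, 1, 0, 0, 0, 0, 0; 0, 0, 1, 0, 0, 0, 0; 0, 0, 0, 0, 1, 0, 0; 0, 0, 0, 0, 0, 1, 0; 0, 0, 0, 0, 0, 0, 1]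
  | 1 => !![1, 0, 0, 0, 0, 0, 0; 0, 1, 0, 0, 0, 0, 0; 0, 0, 0, 1, 0, 0, 0; 0, 0, 1, 0, 0, 0, 0; 0, 0, 0, 0, 1, 0, 0; 0, 0, 0, 0, 0, 1, 0; 0, 0, 0, 0, 0, 0, 1]
  | 2 => !![1, 0, 0, 0, 0, 0, 0; 0, 1, 0, 0, 0, 0, 0; 0, 0, 1, 0, 0, 0, 0; 0, 0, 0, 1, 0, 0, 0; 0, 0, 0, 0, 1, 0, 0; 0, 0, 0, 0, 0, 1, 0; 0, 0, 0, 0, 0, 0, 1]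
  | 3 => !![1, 1, 0, 1, 0, 0, 0; 0, 0, 0, -1, 0, 0, 0; 0, -1, 0, 0, 0, 0, 0; 0, 0, 1, 0, 0, 0, 0; 0, 0, 0, 0, 1, 0, 0; 0, 0, 0, 0, 0, 1, 0; 0, 0, 0, 0, 0, 0, 1]
  | 4 => !![1, 1, 0, 1, 0, 0, 0; 0, -1, 0, 0, 0, 0, 0; 0, 0, 0, -1, 0, 0, 0; 0, 0, 1, 0, 0, 0, 0; 0, 0, 0, 0, 1, 0, 0; 0, 0, 0, 0, 0, 1, 0; 0, 0, 0, 0, 0, 0, 1]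
  | 5 => !![1, 1, 0, 1, 0, 0, 0; 0, -1, 0, 0, 0, 0, 0; 0, 0, 1, 0, 0, 0, 0; 0, 0, 0, -1, 0, 0, 0; 0, 0, 0, 0, 1, 0, 0; 0, 0, 0, 0, 0, 1, 0; 0, 0, 0, 0, 0, 0, 1]
def N3tbl : Fin 6 → Matrix (Fin 7) (Fin 7) ℤ
  | 0 => !![1, 0, 0, 0, 0, 0, 0; 0, 0, 1, 0, 0, 0, 0; 0, 0, 0, 1, 0, 0, 0; 0, 1, 0, 0, 0, 0, 0; 0, 0, 0, 0, 1, 0, 0; 0, 0, 0, 0, 0, 1, 0; 0, 0, 0, 0, 0, 0, 1]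
  | 1 => !![1, 0, 0, 0, 0, 0, 0; 0, 1, 0, 0, 0, 0, 0; 0, 0, 0, 1, 0, 0, 0; 0, 0, 1, 0, 0, 0, 0; 0, 0, 0, 0, 1, 0, 0; 0, 0, 0, 0, 0, 1, 0; 0, 0, 0, 0, 0, 0, 1]
  | 2 => !![1, 0, 0, 0, 0, 0, 0; 0, 1, 0, 0, 0, 0, 0; 0, 0, 1, 0, 0, 0, 0; 0, 0, 0, 1, 0, 0, 0; 0, 0, 0, 0, 1, 0, 0; 0, 0, 0, 0, 0, 1, 0; 0, 0, 0, 0, 0, 0, 1]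
  | 3 => !![1, 1, 1, 0, 0, 0, 0; 0, 0, -1, 0, 0, 0, 0; 0, 0, 0, 1, 0, 0, 0; 0, -1, 0, 0, 0, 0, 0; 0, 0, 0, 0, 1, 0, 0; 0, 0, 0, 0, 0, 1, 0; 0, 0, 0, 0, 0, 0, 1]
  | 4 => !![1, 1, 1, 0, 0, 0, 0; 0, -1, 0, 0, 0, 0, 0; 0, 0, 0, 1, 0, 0, 0; 0, 0, -1, 0, 0, 0, 0; 0, 0, 0, 0, 1, 0, 0; 0, 0, 0, 0, 0, 1, 0; 0, 0, 0, 0, 0, 0, 1]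
  | 5 => !![1, 1, 0, 1, 0, 0, 0; 0, -1, 0, 0, 0, 0, 0; 0, 0, 1, 0, 0, 0, 0; 0, 0, 0, -1, 0, 0, 0; 0, 0, 0, 0, 1, 0, 0; 0, 0, 0, 0, 0, 1, 0; 0, 0, 0, 0, 0, 0, 1]

def M4tbl : Fin 8 → Matrix (Fin 7) (Fin 7) ℤ
  | 0 => !![1, 0, 0, 0, 0, 0, 0; 0, 0, 0, 0, 1, 0, 0; 0, 1, 0, 0, 0, 0, 0; 0, 0, 1, 0, 0, 0, 0; 0, 0, 0, 1, 0, 0, 0; 0, 0, 0, 0, 0, 1, 0; 0, 0, 0, 0, 0, 0, 1]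
  | 1 => !![1, 0, 0, 0, 0, 0, 0; 0, 1, 0, 0, 0, 0, 0; 0, 0, 0, 0, 1, 0, 0; 0, 0, 1, 0, 0, 0, 0; 0, 0, 0, 1, 0, 0, 0; 0, 0, 0, 0, 0, 1, 0; 0, 0, 0, 0, 0, 0, 1]
  | 2 => !![1, 0, 0, 0, 0, 0, 0; 0, 1, 0, 0, 0, 0, 0; 0, 0, 1, 0, 0, 0, 0; 0, 0, 0, 0, 1, 0, 0; 0, 0, 0, 1, 0, 0, 0; 0, 0, 0, 0, 0, 1, 0; 0, 0, 0, 0, 0, 0, 1]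
  | 3 => !![1, 0, 0, 0, 0, 0, 0; 0, 1, 0, 0, 0, 0, 0; 0, 0, 1, 0, 0, 0, 0; 0, 0, 0, 1, 0, 0, 0; 0, 0, 0, 0, 1, 0, 0; 0, 0, 0, 0, 0, 1, 0; 0, 0, 0, 0, 0, 0, 1]
  | 4 => !![1, 1, 0, 0, 1, 0, 0; 0, 0, 0, 0, -1, 0, 0; 0, -1, 0, 0, 0, 0, 0; 0, 0, 1, 0, 0, 0, 0; 0, 0, 0, 1, 0, 0, 0; 0, 0, 0, 0, 0, 1, 0; 0, 0, 0, 0, 0, 0, 1]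
  | 5 => !![1, 1, 0, 0, 1, 0, 0; 0, -1, 0, 0, 0, 0, 0; 0, 0, 0, 0, -1, 0, 0; 0, 0, 1, 0, 0, 0, 0; 0, 0, 0, 1, 0, 0, 0; 0, 0, 0, 0, 0, 1, 0; 0, 0, 0, 0, 0, 0, 1]
  | 6 => !![1, 1, 0, 0, 1, 0, 0; 0, -1, 0, 0, 0, 0, 0; 0, 0, 1, 0, 0, 0, 0; 0, 0, 0, 0, -1, 0, 0; 0, 0, 0, 1, 0, 0, 0; 0, 0, 0, 0, 0, 1, 0; 0, 0, 0, 0, 0, 0, 1]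
  | 7 => !![1, 1, 0, 0, 1, 0, 0; 0, -1, 0, 0, 0, 0, 0; 0, 0, 1, 0, 0, 0, 0; 0, 0, 0, 1, 0, 0, 0; 0, 0, 0, 0, -1, 0, 0; 0, 0, 0, 0, 0, 1, 0; 0, 0, 0, 0, 0, 0, 1]
def N4tbl : Fin 8 → Matrix (Fin 7) (Fin 7) ℤ
  | 0 => !![1, 0, 0, 0, 0, 0, 0; 0, 0, 1, 0, 0, 0, 0; 0, 0, 0, 1, 0, 0, 0; 0, 0, 0, 0, 1, 0, 0; 0, 1, 0, 0, 0, 0, 0; 0, 0, 0, 0, 0, 1, 0; 0, 0, 0, 0, 0, 0, 1]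
  | 1 => !![1, 0, 0, 0, 0, 0, 0; 0, 1, 0, 0, 0, 0, 0; 0, 0, 0, 1, 0, 0, 0; 0, 0, 0, 0, 1, 0, 0; 0, 0, 1, 0, 0, 0, 0; 0, 0, 0, 0, 0, 1, 0; 0, 0, 0, 0, 0, 0, 1]
  | 2 => !![1, 0, 0, 0, 0, 0, 0; 0, 1, 0, 0, 0, 0, 0; 0, 0, 1, 0, 0, 0, 0; 0, 0, 0, 0, 1, 0, 0; 0, 0, 0, 1, 0, 0, 0; 0, 0, 0, 0, 0, 1, 0; 0, 0, 0, 0, 0, 0, 1]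
  | 3 => !![1, 0, 0, 0, 0, 0, 0; 0, 1, 0, 0, 0, 0, 0; 0, 0, 1, 0, 0, 0, 0; 0, 0, 0, 1, 0, 0, 0; 0, 0, 0, 0, 1, 0, 0; 0, 0, 0, 0, 0, 1, 0; 0, 0, 0, 0, 0, 0, 1]
  | 4 => !![1, 1, 1, 0, 0, 0, 0; 0, 0, -1, 0, 0, 0, 0; 0, 0, 0, 1, 0, 0, 0; 0, 0, 0, 0, 1, 0, 0; 0, -1, 0, 0, 0, 0, 0; 0, 0, 0, 0, 0, 1, 0; 0, 0, 0, 0, 0, 0, 1]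
  | 5 => !![1, 1, 1, 0, 0, 0, 0; 0, -1, 0, 0, 0, 0, 0; 0, 0, 0, 1, 0, 0, 0; 0, 0, 0, 0, 1, 0, 0; 0, 0, -1, 0, 0, 0, 0; 0, 0, 0, 0, 0, 1, 0; 0, 0, 0, 0, 0, 0, 1]
  | 6 => !![1, 1, 0, 1, 0, 0, 0; 0, -1, 0, 0, 0, 0, 0; 0, 0, 1, 0, 0, 0, 0; 0, 0, 0, 0, 1, 0, 0; 0, 0, 0, -1, 0, 0, 0; 0, 0, 0, 0, 0, 1, 0; 0, 0, 0, 0, 0, 0, 1]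
  | 7 => !![1, 1, 0, 0, 1, 0, 0; 0, -1, 0, 0, 0, 0, 0; 0, 0, 1, 0, 0, 0, 0; 0, 0, 0, 1, 0, 0, 0; 0, 0, 0, 0, -1, 0, 0; 0, 0, 0, 0, 0, 1, 0; 0, 0, 0, 0, 0, 0, 1]

def M5tbl : Fin 10 → Matrix (Fin 7) (Fin 7) ℤ
  | 0 => !![1, 0, 0, 0, 0, 0, 0; 0, 0, 0, 0, 0, 1, 0; 0, 1, 0, 0, 0, 0, 0; 0, 0, 1, 0, 0, 0, 0; 0, 0, 0, 1, 0, 0, 0; 0, 0, 0, 0, 1, 0, 0; 0, 0, 0, 0, 0, 0, 1]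
  | 1 => !![1, 0, 0, 0, 0, 0, 0; 0, 1, 0, 0, 0, 0, 0; 0, 0, 0, 0, 0, 1, 0; 0, 0, 1, 0, 0, 0, 0; 0, 0, 0, 1, 0, 0, 0; 0, 0, 0, 0, 1, 0, 0; 0, 0, 0, 0, 0, 0, 1]
  | 2 => !![1, 0, 0, 0, 0, 0, 0; 0, 1, 0, 0, 0, 0, 0; 0, 0, 1, 0, 0, 0, 0; 0, 0, 0, 0, 0, 1, 0; 0, 0, 0, 1, 0, 0, 0; 0, 0, 0, 0, 1, 0, 0; 0, 0, 0, 0, 0, 0, 1]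
  | 3 => !![1, 0, 0, 0, 0, 0, 0; 0, 1, 0, 0, 0, 0, 0; 0, 0, 1, 0, 0, 0, 0; 0, 0, 0, 1, 0, 0, 0; 0, 0, 0, 0, 0, 1, 0; 0, 0, 0, 0, 1, 0, 0; 0, 0, 0, 0, 0, 0, 1]
  | 4 => !![1, 0, 0, 0, 0, 0, 0; 0, 1, 0, 0, 0, 0, 0; 0, 0, 1, 0, 0, 0, 0; 0, 0, 0, 1, 0, 0, 0; 0, 0, 0, 0, 1, 0, 0; 0, 0, 0, 0, 0, 1, 0; 0, 0, 0, 0, 0, 0, 1]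
  | 5 => !![1, 1, 0, 0, 0, 1, 0; 0, 0, 0, 0, 0, -1, 0; 0, -1, 0, 0, 0, 0, 0; 0, 0, 1, 0, 0, 0, 0; 0, 0, 0, 1, 0, 0, 0; 0, 0, 0, 0, 1, 0, 0; 0, 0, 0, 0, 0, 0, 1]
  | 6 => !![1, 1, 0, 0, 0, 1, 0; 0, -1, 0, 0, 0, 0, 0; 0, 0, 0, 0, 0, -1, 0; 0, 0, 1, 0, 0, 0, 0; 0, 0, 0, 1, 0, 0, 0; 0, 0, 0, 0, 1, 0, 0; 0, 0, 0, 0, 0, 0, 1]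
  | 7 => !![1, 1, 0, 0, 0, 1, 0; 0, -1, 0, 0, 0, 0, 0; 0, 0, 1, 0, 0, 0, 0; 0, 0, 0, 0, 0, -1, 0; 0, 0, 0, 1, 0, 0, 0; 0, 0, 0, 0, 1, 0, 0; 0, 0, 0, 0, 0, 0, 1]
  | 8 => !![1, 1, 0, 0, 0, 1, 0; 0, -1, 0, 0, 0, 0, 0; 0, 0, 1, 0, 0, 0, 0; 0, 0, 0, 1, 0, 0, 0; 0, 0, 0, 0, 0, -1, 0; 0, 0, 0, 0, 1, 0, 0; 0, 0, 0, 0, 0, 0, 1]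
  | 9 => !![1, 1, 0, 0, 0, 1, 0; 0, -1, 0, 0, 0, 0, 0; 0, 0, 1, 0, 0, 0, 0; 0, 0, 0, 1, 0, 0, 0; 0, 0, 0, 0, 1, 0, 0; 0, 0, 0, 0, 0, -1, 0; 0, 0, 0, 0, 0, 0, 1]
def N5tbl : Fin 10 → Matrix (Fin 7) (Fin 7) ℤ
  | 0 => !![1, 0, 0, 0, 0, 0, 0; 0, 0, 1, 0, 0, 0, 0; 0, 0, 0, 1, 0, 0, 0; 0, 0, 0, 0, 1, 0, 0; 0, 0, 0, 0, 0, 1, 0; 0, 1, 0, 0, 0, 0, 0; 0, 0, 0, 0, 0, 0, 1]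
  | 1 => !![1, 0, 0, 0, 0, 0, 0; 0, 1, 0, 0, 0, 0, 0; 0, 0, 0, 1, 0, 0, 0; 0, 0, 0, 0, 1, 0, 0; 0, 0, 0, 0, 0, 1, 0; 0, 0, 1, 0, 0, 0, 0; 0, 0, 0, 0, 0, 0, 1]
  | 2 => !![1, 0, 0, 0, 0, 0, 0; 0, 1, 0, 0, 0, 0, 0; 0, 0, 1, 0, 0, 0, 0; 0, 0, 0, 0, 1, 0, 0; 0, 0, 0, 0, 0, 1, 0; 0, 0, 0, 1, 0, 0, 0; 0, 0, 0, 0, 0, 0, 1]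
  | 3 => !![1, 0, 0, 0, 0, 0, 0; 0, 1, 0, 0, 0, 0, 0; 0, 0, 1, 0, 0, 0, 0; 0, 0, 0, 1, 0, 0, 0; 0, 0, 0, 0, 0, 1, 0; 0, 0, 0, 0, 1, 0, 0; 0, 0, 0, 0, 0, 0, 1]
  | 4 => !![1, 0, 0, 0, 0, 0, 0; 0, 1, 0, 0, 0, 0, 0; 0, 0, 1, 0, 0, 0, 0; 0, 0, 0, 1, 0, 0, 0; 0, 0, 0, 0, 1, 0, 0; 0, 0, 0, 0, 0, 1, 0; 0, 0, 0, 0, 0, 0, 1]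
  | 5 => !![1, 1, 1, 0, 0, 0, 0; 0, 0, -1, 0, 0, 0, 0; 0, 0, 0, 1, 0, 0, 0; 0, 0, 0, 0, 1, 0, 0; 0, 0, 0, 0, 0, 1, 0; 0, -1, 0, 0, 0, 0, 0; 0, 0, 0, 0, 0, 0, 1]
  | 6 => !![1, 1, 1, 0, 0, 0, 0; 0, -1, 0, 0, 0, 0, 0; 0, 0, 0, 1, 0, 0, 0; 0, 0, 0, 0, 1, 0, 0; 0, 0, 0, 0, 0, 1, 0; 0, 0, -1, 0, 0, 0, 0; 0, 0, 0, 0, 0, 0, 1]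
  | 7 => !![1, 1, 0, 1, 0, 0, 0; 0, -1, 0, 0, 0, 0, 0; 0, 0, 1, 0, 0, 0, 0; 0, 0, 0, 0, 1, 0, 0; 0, 0, 0, 0, 0, 1, 0; 0, 0, 0, -1, 0, 0, 0; 0, 0, 0, 0, 0, 0, 1]
  | 8 => !![1, 1, 0, 0, 1, 0, 0; 0, -1, 0, 0, 0, 0, 0; 0, 0, 1, 0, 0, 0, 0; 0, 0, 0, 1, 0, 0, 0; 0, 0, 0, 0, 0, 1, 0; 0, 0, 0, 0, -1, 0, 0; 0, 0, 0, 0, 0, 0, 1]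
  | 9 => !![1, 1, 0, 0, 0, 1, 0; 0, -1, 0, 0, 0, 0, 0; 0, 0, 1, 0, 0, 0, 0; 0, 0, 0, 1, 0, 0, 0; 0, 0, 0, 0, 1, 0, 0; 0, 0, 0, 0, 0, -1, 0; 0, 0, 0, 0, 0, 0, 1]

def M6tbl : Fin 12 → Matrix (Fin 7) (Fin 7) ℤ
  | 0 => !![1, 0, 0, 0, 0, 0, 0; 0, 0, 0, 0, 0, 0, 1; 0, 1, 0, 0, 0, 0, 0; 0, 0, 1, 0, 0, 0, 0; 0, 0, 0, 1, 0, 0, 0; 0, 0, 0, 0, 1, 0, 0; 0, 0, 0, 0, 0, 1, 0]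
  | 1 => !![1, 0, 0, 0, 0, 0, 0; 0, 1, 0, 0, 0, 0, 0; 0, 0, 0, 0, 0, 0, 1; 0, 0, 1, 0, 0, 0, 0; 0, 0, 0, 1, 0, 0, 0; 0, 0, 0, 0, 1, 0, 0; 0, 0, 0, 0, 0, 1, 0]
  | 2 => !![1, 0, 0, 0, 0, 0, 0; 0, 1, 0, 0, 0, 0, 0; 0, 0, 1, 0, 0, 0, 0; 0, 0, 0, 0, 0, 0, 1; 0, 0, 0, 1, 0, 0, 0; 0, 0, 0, 0, 1, 0, 0; 0, 0, 0, 0, 0, 1, 0]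
  | 3 => !![1, 0, 0, 0, 0, 0, 0; 0, 1, 0, 0, 0, 0, 0; 0, 0, 1, 0, 0, 0, 0; 0, 0, 0, 1, 0, 0, 0; 0, 0, 0, 0, 0, 0, 1; 0, 0, 0, 0, 1, 0, 0; 0, 0, 0, 0, 0, 1, 0]
  | 4 => !![1, 0, 0, 0, 0, 0, 0; 0, 1, 0, 0, 0, 0, 0; 0, 0, 1, 0, 0, 0, 0; 0, 0, 0, 1, 0, 0, 0; 0, 0, 0, 0, 1, 0, 0; 0, 0, 0, 0, 0, 0, 1; 0, 0, 0, 0, 0, 1, 0]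
  | 5 => !![1, 0, 0, 0, 0, 0, 0; 0, 1, 0, 0, 0, 0, 0; 0, 0, 1, 0, 0, 0, 0; 0, 0, 0, 1, 0, 0, 0; 0, 0, 0, 0, 1, 0, 0; 0, 0, 0, 0, 0, 1, 0; 0, 0, 0, 0, 0, 0, 1]
  | 6 => !![1, 1, 0, 0, 0, 0, 1; 0, 0, 0, 0, 0, 0, -1; 0, -1, 0, 0, 0, 0, 0; 0, 0, 1, 0, 0, 0, 0; 0, 0, 0, 1, 0, 0, 0; 0, 0, 0, 0, 1, 0, 0; 0, 0, 0, 0, 0, 1, 0]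
  | 7 => !![1, 1, 0, 0, 0, 0, 1; 0, -1, 0, 0, 0, 0, 0; 0, 0, 0, 0, 0, 0, -1; 0, 0, 1, 0, 0, 0, 0; 0, 0, 0, 1, 0, 0, 0; 0, 0, 0, 0, 1, 0, 0; 0, 0, 0, 0, 0, 1, 0]
  | 8 => !![1, 1, 0, 0, 0, 0, 1; 0, -1, 0, 0, 0, 0, 0; 0, 0, 1, 0, 0, 0, 0; 0, 0, 0, 0, 0, 0, -1; 0, 0, 0, 1, 0, 0, 0; 0, 0, 0, 0, 1, 0, 0; 0, 0, 0, 0, 0, 1, 0]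
  | 9 => !![1, 1, 0, 0, 0, 0, 1; 0, -1, 0, 0, 0, 0, 0; 0, 0, 1, 0, 0, 0, 0; 0, 0, 0, 1, 0, 0, 0; 0, 0, 0, 0, 0, 0, -1; 0, 0, 0, 0, 1, 0, 0; 0, 0, 0, 0, 0, 1, 0]
  | 10 => !![1, 1, 0, 0, 0, 0, 1; 0, -1, 0, 0, 0, 0, 0; 0, 0, 1, 0, 0, 0, 0; 0, 0, 0, 1, 0, 0, 0; 0, 0, 0, 0, 1, 0, 0; 0, 0, 0, 0, 0, 0, -1; 0, 0, 0, 0, 0, 1, 0]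
  | 11 => !![1, 1, 0, 0, 0, 0, 1; 0, -1, 0, 0, 0, 0, 0; 0, 0, 1, 0, 0, 0, 0; 0, 0, 0, 1, 0, 0, 0; 0, 0, 0, 0, 1, 0, 0; 0, 0, 0, 0, 0, 1, 0; 0, 0, 0, 0, 0, 0, -1]
def N6tbl : Fin 12 → Matrix (Fin 7) (Fin 7) ℤ
  | 0 => !![1, 0, 0, 0, 0, 0, 0; 0, 0, 1, 0, 0, 0, 0; 0, 0, 0, 1, 0, 0, 0; 0, 0, 0, 0, 1, 0, 0; 0, 0, 0, 0, 0, 1, 0; 0, 0, 0, 0, 0, 0, 1; 0, 1, 0, 0, 0, 0, 0]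
  | 1 => !![1, 0, 0, 0, 0, 0, 0; 0, 1, 0, 0, 0, 0, 0; 0, 0, 0, 1, 0, 0, 0; 0, 0, 0, 0, 1, 0, 0; 0, 0, 0, 0, 0, 1, 0; 0, 0, 0, 0, 0, 0, 1; 0, 0, 1, 0, 0, 0, 0]
  | 2 => !![1, 0, 0, 0, 0, 0, 0; 0, 1, 0, 0, 0, 0, 0; 0, 0, 1, 0, 0, 0, 0; 0, 0, 0, 0, 1, 0, 0; 0, 0, 0, 0, 0, 1, 0; 0, 0, 0, 0, 0, 0, 1; 0, 0, 0, 1, 0, 0, 0]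
  | 3 => !![1, 0, 0, 0, 0, 0, 0; 0, 1, 0, 0, 0, 0, 0; 0, 0, 1, 0, 0, 0, 0; 0, 0, 0, 1, 0, 0, 0; 0, 0, 0, 0, 0, 1, 0; 0, 0, 0, 0, 0, 0, 1; 0, 0, 0, 0, 1, 0, 0]
  | 4 => !![1, 0, 0, 0, 0, 0, 0; 0, 1, 0, 0, 0, 0, 0; 0, 0, 1, 0, 0, 0, 0; 0, 0, 0, 1, 0, 0, 0; 0, 0, 0, 0, 1, 0, 0; 0, 0, 0, 0, 0, 0, 1; 0, 0, 0, 0, 0, 1, 0]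
  | 5 => !![1, 0, 0, 0, 0, 0, 0; 0, 1, 0, 0, 0, 0, 0; 0, 0, 1, 0, 0, 0, 0; 0, 0, 0, 1, 0, 0, 0; 0, 0, 0, 0, 1, 0, 0; 0, 0, 0, 0, 0, 1, 0; 0, 0, 0, 0, 0, 0, 1]
  | 6 => !![1, 1, 1, 0, 0, 0, 0; 0, 0, -1, 0, 0, 0, 0; 0, 0, 0, 1, 0, 0, 0; 0, 0, 0, 0, 1, 0, 0; 0, 0, 0, 0, 0, 1, 0; 0, 0, 0, 0, 0, 0, 1; 0, -1, 0, 0, 0, 0, 0]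
  | 7 => !![1, 1, 1, 0, 0, 0, 0; 0, -1, 0, 0, 0, 0, 0; 0, 0, 0, 1, 0, 0, 0; 0, 0, 0, 0, 1, 0, 0; 0, 0, 0, 0, 0, 1, 0; 0, 0, 0, 0, 0, 0, 1; 0, 0, -1, 0, 0, 0, 0]
  | 8 => !![1, 1, 0, 1, 0, 0, 0; 0, -1, 0, 0, 0, 0, 0; 0, 0, 1, 0, 0, 0, 0; 0, 0, 0, 0, 1, 0, 0; 0, 0, 0, 0, 0, 1, 0; 0, 0, 0, 0, 0, 0, 1; 0, 0, 0, -1, 0, 0, 0]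
  | 9 => !![1, 1, 0, 0, 1, 0, 0; 0, -1, 0, 0, 0, 0, 0; 0, 0, 1, 0, 0, 0, 0; 0, 0, 0, 1, 0, 0, 0; 0, 0, 0, 0, 0, 1, 0; 0, 0, 0, 0, 0, 0, 1; 0, 0, 0, 0, -1, 0, 0]
  | 10 => !![1, 1, 0, 0, 0, 1, 0; 0, -1, 0, 0, 0, 0, 0; 0, 0, 1, 0, 0, 0, 0; 0, 0, 0, 1, 0, 0, 0; 0, 0, 0, 0, 1, 0, 0; 0, 0, 0, 0, 0, 0, 1; 0, 0, 0, 0, 0, -1, 0]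
  | 11 => !![1, 1, 0, 0, 0, 0, 1; 0, -1, 0, 0, 0, 0, 0; 0, 0, 1, 0, 0, 0, 0; 0, 0, 0, 1, 0, 0, 0; 0, 0, 0, 0, 1, 0, 0; 0, 0, 0, 0, 0, 1, 0; 0, 0, 0, 0, 0, 0, -1]


-- tuple types for the normal form
abbrev T2 := Fin 4
abbrev T3 := Fin 6 × T2
abbrev T4 := Fin 8 × T3
abbrev T5 := Fin 10 × T4
abbrev T6 := Fin 12 × T5

def cw2 (a : T2) : List (Fin 6) := lw2 a
def cw3 (a : T3) : List (Fin 6) := lw3 a.1 ++ cw2 a.2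
def cw4 (a : T4) : List (Fin 6) := lw4 a.1 ++ cw3 a.2
def cw5 (a : T5) : List (Fin 6) := lw5 a.1 ++ cw4 a.2
def cw6 (a : T6) : List (Fin 6) := lw6 a.1 ++ cw5 a.2

lemma step2 (i : Fin 6) (hi : i.val ≤ 1) (a : T2) : ∃ b : T2, sg i * wp (cw2 a) = wp (cw2 b) := by
  obtain ⟨r', he⟩ := key2 i a hi
  exact ⟨r', by rw [cw2, ← wp_cons, he, cw2]⟩

lemma step3 (i : Fin 6) (hi : i.val ≤ 2) (a : T3) : ∃ b : T3, sg i * wp (cw3 a) = wp (cw3 b) := by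
  obtain ⟨r, a2⟩ := a
  obtain ⟨r', t, ht, he⟩ := key3 i r hi
  have base : sg i * wp (cw3 (r, a2)) = wp (lw3 r' ++ t) * wp (cw2 a2) := by
    rw [cw3, wp_append, ← mul_assoc, ← wp_cons, he, wp_append]
  rcases ht with rfl | ⟨k, rfl, hk⟩
  · exact ⟨(r', a2), by rw [base, List.append_nil, cw3, wp_append]⟩
  · obtain ⟨b2, hb2⟩ := step2 k (by omega) a2
    refine ⟨(r', b2), ?_⟩
    rw [base, wp_append, wp_singleton, mul_assoc, hb2,
      cw3, wp_append]

lemma step4 (i : Fin 6) (hi : i.val ≤ 3) (a : T4) : ∃ b : T4, sg i * wp (cw4 a) = wp (cw4 b) := by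
  obtain ⟨r, a2⟩ := a
  obtain ⟨r', t, ht, he⟩ := key4 i r hi
  have base : sg i * wp (cw4 (r, a2)) = wp (lw4 r' ++ t) * wp (cw3 a2) := by
    rw [cw4, wp_append, ← mul_assoc, ← wp_cons, he, wp_append]
  rcases ht with rfl | ⟨k, rfl, hk⟩
  · exact ⟨(r', a2), by rw [base, List.append_nil, cw4, wp_append]⟩
  · obtain ⟨b2, hb2⟩ := step3 k (by omega) a2
    refine ⟨(r', b2), ?_⟩
    rw [base, wp_append, wp_singleton, mul_assoc, hb2,
      cw4, wp_append]

lemma step5 (i : Fin 6) (hi : i.val ≤ 4) (a : T5) : ∃ b : T5, sg i * wp (cw5 a) = wp (cw5 b) := by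
  obtain ⟨r, a2⟩ := a
  obtain ⟨r', t, ht, he⟩ := key5 i r hi
  have base : sg i * wp (cw5 (r, a2)) = wp (lw5 r' ++ t) * wp (cw4 a2) := by
    rw [cw5, wp_append, ← mul_assoc, ← wp_cons, he, wp_append]
  rcases ht with rfl | ⟨k, rfl, hk⟩
  · exact ⟨(r', a2), by rw [base, List.append_nil, cw5, wp_append]⟩
  · obtain ⟨b2, hb2⟩ := step4 k (by omega) a2
    refine ⟨(r', b2), ?_⟩
    rw [base, wp_append, wp_singleton, mul_assoc, hb2,
      cw5, wp_append]

lemma step6 (i : Fin 6) (a : T6) : ∃ b : T6, sg i * wp (cw6 a) = wp (cw6 b) := by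
  obtain ⟨r, a2⟩ := a
  obtain ⟨r', t, ht, he⟩ := key6 i r (by omega)
  have base : sg i * wp (cw6 (r, a2)) = wp (lw6 r' ++ t) * wp (cw5 a2) := by
    rw [cw6, wp_append, ← mul_assoc, ← wp_cons, he, wp_append]
  rcases ht with rfl | ⟨k, rfl, hk⟩
  · exact ⟨(r', a2), by rw [base, List.append_nil, cw6, wp_append]⟩
  · obtain ⟨b2, hb2⟩ := step5 k (by omega) a2
    refine ⟨(r', b2), ?_⟩
    rw [base, wp_append, wp_singleton, mul_assoc, hb2,
      cw6, wp_append]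

/-- The normal-form map. -/
def NF (a : T6) : W := wp (cw6 a)

lemma NF_surjective : Function.Surjective NF := by
  intro w
  induction w using cs.simple_induction_left with
  | one => exact ⟨(5, 4, 3, 2, 1), rfl⟩
  | mul_simple_left w i ih =>
      obtain ⟨a, rfl⟩ := ih
      obtain ⟨b, hb⟩ := step6 i a
      exact ⟨b, hb.symm⟩

def genZ : Fin 6 → Matrix (Fin 7) (Fin 7) ℤ
  | 0 => !![1, 1, 1, 0, 0, 0, 0; 0, 0, -1, 0, 0, 0, 0; 0, -1, 0, 0, 0, 0, 0;
            0, 0, 0, 1, 0, 0, 0; 0, 0, 0, 0, 1, 0, 0; 0, 0, 0, 0, 0, 1, 0; 0, 0, 0, 0, 0, 0, 1]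
  | 1 => !![1,0,0,0,0,0,0; 0,0,1,0,0,0,0; 0,1,0,0,0,0,0; 0,0,0,1,0,0,0; 0,0,0,0,1,0,0; 0,0,0,0,0,1,0; 0,0,0,0,0,0,1]
  | 2 => !![1,0,0,0,0,0,0; 0,1,0,0,0,0,0; 0,0,0,1,0,0,0; 0,0,1,0,0,0,0; 0,0,0,0,1,0,0; 0,0,0,0,0,1,0; 0,0,0,0,0,0,1]
  | 3 => !![1,0,0,0,0,0,0; 0,1,0,0,0,0,0; 0,0,1,0,0,0,0; 0,0,0,0,1,0,0; 0,0,0,1,0,0,0; 0,0,0,0,0,1,0; 0,0,0,0,0,0,1]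
  | 4 => !![1,0,0,0,0,0,0; 0,1,0,0,0,0,0; 0,0,1,0,0,0,0; 0,0,0,1,0,0,0; 0,0,0,0,0,1,0; 0,0,0,0,1,0,0; 0,0,0,0,0,0,1]
  | 5 => !![1,0,0,0,0,0,0; 0,1,0,0,0,0,0; 0,0,1,0,0,0,0; 0,0,0,1,0,0,0; 0,0,0,0,1,0,0; 0,0,0,0,0,0,1; 0,0,0,0,0,1,0]

set_option maxHeartbeats 1000000 in
lemma liftable : CoxD6.IsLiftable genZ := by
  intro i j
  fin_cases i <;> fin_cases j <;> decide


def mp (l : List (Fin 6)) : Matrix (Fin 7) (Fin 7) ℤ := (l.map genZ).prod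

lemma mp_nil : mp [] = 1 := rfl
lemma mp_cons (k : Fin 6) (l : List (Fin 6)) : mp (k :: l) = genZ k * mp l := by
  simp [mp]
lemma mp_append (l l' : List (Fin 6)) : mp (l ++ l') = mp l * mp l' := by
  simp [mp]

def phiZ : W →* Matrix (Fin 7) (Fin 7) ℤ := cs.lift ⟨genZ, liftable⟩

lemma phiZ_simple (i : Fin 6) : phiZ (sg i) = genZ i := cs.lift_apply_simple liftable i

lemma phiZ_wp : ∀ l : List (Fin 6), phiZ (wp l) = mp l
  | [] => by rw [wp_nil, mp_nil, map_one]
  | k :: l => by rw [wp_cons, mp_cons, map_mul, phiZ_simple, phiZ_wp l]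

lemma genZ_col : ∀ (k : Fin 6) (c : Fin 7), k.val + 2 ≤ c.val → 3 ≤ c.val →
    ∀ i, genZ k i c = if i = c then 1 else 0 := by decide

lemma col_std_mul {Y X : Matrix (Fin 7) (Fin 7) ℤ} {c : Fin 7}
    (hY : ∀ t, Y t c = if t = c then 1 else 0) (i : Fin 7) : (X * Y) i c = X i c := by
  simp [Matrix.mul_apply, hY, mul_ite]

lemma mp_col_std (m : ℕ) : ∀ (l : List (Fin 6)), (∀ k ∈ l, k.val ≤ m) →
    ∀ (c : Fin 7), m + 2 ≤ c.val → 3 ≤ c.val → ∀ i, mp l i c = if i = c then 1 else 0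
  | [], _, c, _, _, i => by rw [mp_nil]; exact Matrix.one_apply
  | k :: l, hl, c, hc, h3, i => by
      have hk := hl k List.mem_cons_self
      have ihl := mp_col_std m l (fun k hk => hl k (List.mem_cons_of_mem _ hk)) c hc h3
      rw [mp_cons, col_std_mul ihl i]
      exact genZ_col k c (by omega) h3 i

-- word letter bounds
lemma lwb2 : ∀ r : Fin 4, ∀ k ∈ lw2 r, k.val ≤ 1 := by decide
lemma lwb3 : ∀ r : Fin 6, ∀ k ∈ lw3 r, k.val ≤ 2 := by decide
lemma lwb4 : ∀ r : Fin 8, ∀ k ∈ lw4 r, k.val ≤ 3 := by decide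
lemma lwb5 : ∀ r : Fin 10, ∀ k ∈ lw5 r, k.val ≤ 4 := by decide
lemma lwb6 : ∀ r : Fin 12, ∀ k ∈ lw6 r, k.val ≤ 5 := by decide

lemma cwb2 (a : T2) : ∀ k ∈ cw2 a, k.val ≤ 1 := lwb2 a
lemma cwb3 (a : T3) : ∀ k ∈ cw3 a, k.val ≤ 2 := by
  intro k hk
  rcases List.mem_append.1 hk with h | h
  · exact lwb3 a.1 k h
  · exact le_trans (cwb2 a.2 k h) (by norm_num)
lemma cwb4 (a : T4) : ∀ k ∈ cw4 a, k.val ≤ 3 := by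
  intro k hk
  rcases List.mem_append.1 hk with h | h
  · exact lwb4 a.1 k h
  · exact le_trans (cwb3 a.2 k h) (by norm_num)
lemma cwb5 (a : T5) : ∀ k ∈ cw5 a, k.val ≤ 4 := by
  intro k hk
  rcases List.mem_append.1 hk with h | h
  · exact lwb5 a.1 k h
  · exact le_trans (cwb4 a.2 k h) (by norm_num)

-- table lemmas
set_option maxHeartbeats 1000000 in
lemma mpM2 : ∀ r : Fin 4, mp (lw2 r) = M2tbl r := by decide
set_option maxHeartbeats 1000000 in
lemma mpM3 : ∀ r : Fin 6, mp (lw3 r) = M3tbl r := by decide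
set_option maxHeartbeats 1000000 in
lemma mpM4 : ∀ r : Fin 8, mp (lw4 r) = M4tbl r := by decide
set_option maxHeartbeats 2000000 in
lemma mpM5 : ∀ r : Fin 10, mp (lw5 r) = M5tbl r := by decide
set_option maxHeartbeats 4000000 in
lemma mpM6 : ∀ r : Fin 12, mp (lw6 r) = M6tbl r := by decide

set_option maxHeartbeats 1000000 in
lemma NM3 : ∀ r : Fin 6, N3tbl r * M3tbl r = 1 := by decide
set_option maxHeartbeats 1000000 in
lemma NM4 : ∀ r : Fin 8, N4tbl r * M4tbl r = 1 := by decide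
set_option maxHeartbeats 1000000 in
lemma NM5 : ∀ r : Fin 10, N5tbl r * M5tbl r = 1 := by decide
set_option maxHeartbeats 1000000 in
lemma NM6 : ∀ r : Fin 12, N6tbl r * M6tbl r = 1 := by decide

set_option maxHeartbeats 1000000 in
lemma col3inj : ∀ r r' : Fin 6, (∀ i, M3tbl r i 3 = M3tbl r' i 3) → r = r' := by decide
set_option maxHeartbeats 1000000 in
lemma col4inj : ∀ r r' : Fin 8, (∀ i, M4tbl r i 4 = M4tbl r' i 4) → r = r' := by decide
set_option maxHeartbeats 1000000 in
lemma col5inj : ∀ r r' : Fin 10, (∀ i, M5tbl r i 5 = M5tbl r' i 5) → r = r' := by decide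
set_option maxHeartbeats 2000000 in
lemma col6inj : ∀ r r' : Fin 12, (∀ i, M6tbl r i 6 = M6tbl r' i 6) → r = r' := by decide
set_option maxHeartbeats 1000000 in
lemma M2inj : ∀ a b : Fin 4, M2tbl a = M2tbl b → a = b := by decide

lemma inj2 : ∀ a b : T2, mp (cw2 a) = mp (cw2 b) → a = b := by
  intro a b h
  rw [cw2, cw2, mpM2, mpM2] at h
  exact M2inj a b h

lemma inj3 : ∀ a b : T3, mp (cw3 a) = mp (cw3 b) → a = b := by
  rintro ⟨r, a2⟩ ⟨r2, b2⟩ h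
  rw [cw3, cw3, mp_append, mp_append, mpM3, mpM3] at h
  dsimp only at h
  have hca := mp_col_std 1 (cw2 a2) (cwb2 a2) 3 (by decide) (by decide)
  have hcb := mp_col_std 1 (cw2 b2) (cwb2 b2) 3 (by decide) (by decide)
  have hr : r = r2 := by
    refine col3inj r r2 fun i => ?_
    calc M3tbl r i 3 = (M3tbl r * mp (cw2 a2)) i 3 := (col_std_mul hca i).symm
      _ = (M3tbl r2 * mp (cw2 b2)) i 3 := by rw [h]
      _ = M3tbl r2 i 3 := col_std_mul hcb i
  subst hr
  have h2 : mp (cw2 a2) = mp (cw2 b2) := by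
    have := congrArg (fun X => N3tbl r * X) h
    simpa [← mul_assoc, NM3 r] using this
  rw [inj2 a2 b2 h2]

lemma inj4 : ∀ a b : T4, mp (cw4 a) = mp (cw4 b) → a = b := by
  rintro ⟨r, a2⟩ ⟨r2, b2⟩ h
  rw [cw4, cw4, mp_append, mp_append, mpM4, mpM4] at h
  dsimp only at h
  have hca := mp_col_std 2 (cw3 a2) (cwb3 a2) 4 (by decide) (by decide)
  have hcb := mp_col_std 2 (cw3 b2) (cwb3 b2) 4 (by decide) (by decide)
  have hr : r = r2 := by
    refine col4inj r r2 fun i => ?_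
    calc M4tbl r i 4 = (M4tbl r * mp (cw3 a2)) i 4 := (col_std_mul hca i).symm
      _ = (M4tbl r2 * mp (cw3 b2)) i 4 := by rw [h]
      _ = M4tbl r2 i 4 := col_std_mul hcb i
  subst hr
  have h2 : mp (cw3 a2) = mp (cw3 b2) := by
    have := congrArg (fun X => N4tbl r * X) h
    simpa [← mul_assoc, NM4 r] using this
  rw [inj3 a2 b2 h2]

lemma inj5 : ∀ a b : T5, mp (cw5 a) = mp (cw5 b) → a = b := by
  rintro ⟨r, a2⟩ ⟨r2, b2⟩ h
  rw [cw5, cw5, mp_append, mp_append, mpM5, mpM5] at h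
  dsimp only at h
  have hca := mp_col_std 3 (cw4 a2) (cwb4 a2) 5 (by decide) (by decide)
  have hcb := mp_col_std 3 (cw4 b2) (cwb4 b2) 5 (by decide) (by decide)
  have hr : r = r2 := by
    refine col5inj r r2 fun i => ?_
    calc M5tbl r i 5 = (M5tbl r * mp (cw4 a2)) i 5 := (col_std_mul hca i).symm
      _ = (M5tbl r2 * mp (cw4 b2)) i 5 := by rw [h]
      _ = M5tbl r2 i 5 := col_std_mul hcb i
  subst hr
  have h2 : mp (cw4 a2) = mp (cw4 b2) := by
    have := congrArg (fun X => N5tbl r * X) h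
    simpa [← mul_assoc, NM5 r] using this
  rw [inj4 a2 b2 h2]

lemma inj6 : ∀ a b : T6, mp (cw6 a) = mp (cw6 b) → a = b := by
  rintro ⟨r, a2⟩ ⟨r2, b2⟩ h
  rw [cw6, cw6, mp_append, mp_append, mpM6, mpM6] at h
  dsimp only at h
  have hca := mp_col_std 4 (cw5 a2) (cwb5 a2) 6 (by decide) (by decide)
  have hcb := mp_col_std 4 (cw5 b2) (cwb5 b2) 6 (by decide) (by decide)
  have hr : r = r2 := by
    refine col6inj r r2 fun i => ?_
    calc M6tbl r i 6 = (M6tbl r * mp (cw5 a2)) i 6 := (col_std_mul hca i).symm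
      _ = (M6tbl r2 * mp (cw5 b2)) i 6 := by rw [h]
      _ = M6tbl r2 i 6 := col_std_mul hcb i
  subst hr
  have h2 : mp (cw5 a2) = mp (cw5 b2) := by
    have := congrArg (fun X => N6tbl r * X) h
    simpa [← mul_assoc, NM6 r] using this
  rw [inj5 a2 b2 h2]

lemma NF_injective : Function.Injective NF := by
  intro a b h
  have : mp (cw6 a) = mp (cw6 b) := by
    rw [← phiZ_wp, ← phiZ_wp]; exact congrArg phiZ h
  exact inj6 a b this

lemma phiZ_injective : Function.Injective phiZ := by
  intro w w' h
  obtain ⟨a, rfl⟩ := NF_surjective w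
  obtain ⟨b, rfl⟩ := NF_surjective w'
  have hm : mp (cw6 a) = mp (cw6 b) := by
    rw [← phiZ_wp, ← phiZ_wp]; exact h
  rw [inj6 a b hm]

lemma card_W : Nat.card W = 23040 := by
  rw [← Nat.card_eq_of_bijective NF ⟨NF_injective, NF_surjective⟩]
  simp [Nat.card_eq_fintype_card]




lemma cons7_5 {α : Type*} (a₀ a₁ a₂ a₃ a₄ a₅ a₆ : α) :
    ![a₀, a₁, a₂, a₃, a₄, a₅, a₆] (5 : Fin 7) = a₅ := rfl
lemma cons7_6 {α : Type*} (a₀ a₁ a₂ a₃ a₄ a₅ a₆ : α) :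
    ![a₀, a₁, a₂, a₃, a₄, a₅, a₆] (6 : Fin 7) = a₆ := rfl

def castHom : Matrix (Fin 7) (Fin 7) ℤ →+* Matrix (Fin 7) (Fin 7) ℝ :=
  (Int.castRingHom ℝ).mapMatrix

lemma castHom_injective : Function.Injective castHom := by
  intro M N h
  ext i j
  apply Int.cast_injective (α := ℝ)
  have := congrFun (congrFun (congrArg (fun X => (X : Matrix (Fin 7) (Fin 7) ℝ)) h) i) j
  simpa [castHom, Matrix.map_apply] using this

def phiR : W →* Matrix (Fin 7) (Fin 7) ℝ := castHom.toMonoidHom.comp phiZ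

lemma phiR_injective : Function.Injective phiR := by
  have : ⇑phiR = ⇑castHom ∘ ⇑phiZ := rfl
  rw [this]
  exact castHom_injective.comp phiZ_injective

lemma simple_eq (i : Fin 6) : CoxD6.simple i = sg i :=
  (congrFun (CoxeterMatrix.toCoxeterSystem_simple CoxD6) i).symm

lemma phiR_simple (i : Fin 6) : phiR (CoxD6.simple i) = (genZ i).map (Int.cast : ℤ → ℝ) := by
  rw [simple_eq, phiR, MonoidHom.comp_apply, phiZ_simple]
  rfl

lemma phiR_s1 : phiR (CoxD6.simple 1) = P7 1 2 := by
  rw [phiR_simple]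
  ext i j
  rw [Matrix.map_apply]
  fin_cases i <;> fin_cases j <;>
    first
      | exact Int.cast_one
      | exact Int.cast_zero
      | exact (by norm_num : ((-1 : ℤ) : ℝ) = -1)

lemma phiR_s2 : phiR (CoxD6.simple 2) = P7 2 3 := by
  rw [phiR_simple]
  ext i j
  rw [Matrix.map_apply]
  fin_cases i <;> fin_cases j <;>
    first
      | exact Int.cast_one
      | exact Int.cast_zero
      | exact (by norm_num : ((-1 : ℤ) : ℝ) = -1)

lemma phiR_s3 : phiR (CoxD6.simple 3) = P7 3 4 := by
  rw [phiR_simple]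
  ext i j
  rw [Matrix.map_apply]
  fin_cases i <;> fin_cases j <;>
    first
      | exact Int.cast_one
      | exact Int.cast_zero
      | exact (by norm_num : ((-1 : ℤ) : ℝ) = -1)

lemma phiR_s4 : phiR (CoxD6.simple 4) = P7 4 5 := by
  rw [phiR_simple]
  ext i j
  rw [Matrix.map_apply]
  fin_cases i <;> fin_cases j <;>
    first
      | exact Int.cast_one
      | exact Int.cast_zero
      | exact (by norm_num : ((-1 : ℤ) : ℝ) = -1)

lemma phiR_s5 : phiR (CoxD6.simple 5) = P7 5 6 := by
  rw [phiR_simple]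
  ext i j
  rw [Matrix.map_apply]
  fin_cases i <;> fin_cases j <;>
    first
      | exact Int.cast_one
      | exact Int.cast_zero
      | exact (by norm_num : ((-1 : ℤ) : ℝ) = -1)

lemma phiR_s0 : phiR (CoxD6.simple 0) = A₁ := by
  rw [phiR_simple]
  ext i j
  rw [Matrix.map_apply]
  fin_cases i <;> fin_cases j <;>
    first
      | exact Int.cast_one
      | exact Int.cast_zero
      | exact (by norm_num : ((-1 : ℤ) : ℝ) = -1)

lemma phiR_cs (i : Fin 6) : phiR (sg i) = phiR (CoxD6.simple i) := by
  rw [simple_eq]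

lemma range_phiR : Set.range phiR =
    ↑(Submonoid.closure ({P7 1 2, P7 2 3, P7 3 4, P7 4 5, P7 5 6, A₁} :
      Set (Matrix (Fin 7) (Fin 7) ℝ))) := by
  have hset : Set.range (⇑phiR ∘ cs.simple) =
      ({P7 1 2, P7 2 3, P7 3 4, P7 4 5, P7 5 6, A₁} : Set (Matrix (Fin 7) (Fin 7) ℝ)) := by
    ext x
    simp only [Set.mem_insert_iff, Set.mem_singleton_iff, Set.mem_range, Function.comp_apply]
    constructor
    · rintro ⟨i, rfl⟩
      fin_cases i
      · exact Or.inr (Or.inr (Or.inr (Or.inr (Or.inr ((phiR_cs 0).trans phiR_s0)))))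
      · exact Or.inl ((phiR_cs 1).trans phiR_s1)
      · exact Or.inr (Or.inl ((phiR_cs 2).trans phiR_s2))
      · exact Or.inr (Or.inr (Or.inl ((phiR_cs 3).trans phiR_s3)))
      · exact Or.inr (Or.inr (Or.inr (Or.inl ((phiR_cs 4).trans phiR_s4))))
      · exact Or.inr (Or.inr (Or.inr (Or.inr (Or.inl ((phiR_cs 5).trans phiR_s5)))))
    · intro hx
      rcases hx with rfl | rfl | rfl | rfl | rfl | rfl
      · exact ⟨1, (phiR_cs 1).trans phiR_s1⟩
      · exact ⟨2, (phiR_cs 2).trans phiR_s2⟩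
      · exact ⟨3, (phiR_cs 3).trans phiR_s3⟩
      · exact ⟨4, (phiR_cs 4).trans phiR_s4⟩
      · exact ⟨5, (phiR_cs 5).trans phiR_s5⟩
      · exact ⟨0, (phiR_cs 0).trans phiR_s0⟩
  calc Set.range ⇑phiR = ↑(MonoidHom.mrange phiR) := rfl
    _ = ↑((⊤ : Submonoid W).map phiR) := by rw [MonoidHom.mrange_eq_map]
    _ = ↑((Submonoid.closure (Set.range cs.simple)).map phiR) := by
        rw [cs.submonoid_closure_range_simple]
    _ = ↑(Submonoid.closure (⇑phiR '' Set.range cs.simple)) := by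
        rw [MonoidHom.map_mclosure]
    _ = _ := by rw [← Set.range_comp, hset]


end Aux

/-- The subgroup of `GL₇(ℝ)` generated by `M₇⁺(2,3)`, `M₇⁺(3,4)`, `M₇⁺(4,5)`,
`M₇⁺(5,6)`, `M₇⁺(6,7)` and `A₁` is isomorphic to the Coxeter group `W(D₆)` of order
`23040`, with the listed generators corresponding to the Coxeter generators
`s₁, s₂, s₃, s₄, s₅, s₁′`.  (Indices of `P7` are 0-based.) -/
theorem subgroup_iso_coxeterD6 :
    ∃ φ : CoxD6.Group →* Matrix (Fin 7) (Fin 7) ℝ,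
      Function.Injective φ ∧
      φ (CoxD6.simple 1) = P7 1 2 ∧
      φ (CoxD6.simple 2) = P7 2 3 ∧
      φ (CoxD6.simple 3) = P7 3 4 ∧
      φ (CoxD6.simple 4) = P7 4 5 ∧
      φ (CoxD6.simple 5) = P7 5 6 ∧
      φ (CoxD6.simple 0) = A₁ ∧
      Set.range φ =
        ↑(Submonoid.closure ({P7 1 2, P7 2 3, P7 3 4, P7 4 5, P7 5 6, A₁} :
          Set (Matrix (Fin 7) (Fin 7) ℝ))) ∧
      Nat.card CoxD6.Group = 23040 := by
  exact ⟨phiR, phiR_injective, phiR_s1, phiR_s2, phiR_s3, phiR_s4, phiR_s5, phiR_s0,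
    range_phiR, card_W⟩
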